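/- arXiv:2110.07781 — 5 statements merged into one kernel-verified Lean document; each statement's English description precedes it below -/
import Mathlib

section
/- Let 2 ≤ p ≤ q be integers and let α = (α₁,…,α_q) be a tuple of nonzero complex numbers that contains an exponentially increasing subsequence of length p. Then every subset-sum representation β = (β₁,…,β_r) of α (with all β_j nonzero) has length r ≥ p / log₂(p). -/
open scoped BigOperators

lemma moulton_aux_lt (p : ℕ) (hp : 2 ≤ p) : p + 1 < 2 ^ p := by
  induction p with
  | zero => omega
  | succ n ih =>
    rcases Nat.lt_or_ge n 2 with h | h
    · have hn : n = 1 := by omega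
      subst hn; norm_num
    · have h1 := ih h
      have h2 : 2 ^ (n + 1) = 2 * 2 ^ n := by rw [pow_succ]; ring
      omega

lemma moulton_two_pow_ne (p r : ℕ) (hp : 2 ≤ p) : 2 ^ p ≠ p ^ r + 1 := by
  intro h
  have h4 : (4 : ℕ) ∣ 2 ^ p := by
    have hp2 : p = 2 + (p - 2) := by omega
    rw [hp2, pow_add]
    exact Dvd.intro _ rfl
  rcases Nat.even_or_odd p with hpe | hpo
  · rcases Nat.eq_zero_or_pos r with hr | hr
    · subst hr
      simp only [pow_zero] at h
      have hinj : p = 1 := Nat.pow_right_injective (le_refl 2) (h.trans rfl)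
      omega
    · have h2 : 2 ∣ p ^ r := dvd_pow hpe.two_dvd (by omega)
      have h2' : 2 ∣ 2 ^ p := dvd_pow_self 2 (by omega)
      omega
  · rcases Nat.even_or_odd r with hre | hro
    · obtain ⟨s, hs⟩ := hre
      have hx : Odd (p ^ s) := hpo.pow
      obtain ⟨k, hk⟩ := hx
      have hsq : p ^ r = p ^ s * p ^ s := by rw [hs, ← pow_add]
      rw [hsq, hk] at h
      have hexpand : (2 * k + 1) * (2 * k + 1) = 4 * (k * k + k) + 1 := by ring
      rw [hexpand] at h
      obtain ⟨c, hc⟩ := h4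
      omega
    · have hgeom := geom_sum₂_mul (p : ℤ) (-1) r
      rw [hro.neg_one_pow, sub_neg_eq_add, sub_neg_eq_add] at hgeom
      set T : ℤ := ∑ i ∈ Finset.range r, (p : ℤ) ^ i * (-1) ^ (r - 1 - i) with hT
      have hz : ((p : ℤ)) ^ r + 1 = 2 ^ p := by exact_mod_cast h.symm
      have hdvd : (p + 1) ∣ 2 ^ p := by
        have hd : ((p : ℤ) + 1) ∣ (2 : ℤ) ^ p := Dvd.intro_left T (by rw [hgeom, hz])
        have : ((p + 1 : ℕ) : ℤ) ∣ ((2 ^ p : ℕ) : ℤ) := by push_cast; exact_mod_cast hd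
        exact_mod_cast this
      obtain ⟨a, ha_le, hpa⟩ := (Nat.dvd_prime_pow Nat.prime_two).mp hdvd
      have halt : a < p := by
        by_contra hcon
        have haeq : a = p := le_antisymm ha_le (le_of_not_gt hcon)
        rw [haeq] at hpa
        have := moulton_aux_lt p hp
        omega
      have hTval : T = 2 ^ (p - a) := by
        have hpz : ((p : ℤ) + 1) = 2 ^ a := by exact_mod_cast hpa
        have h1 : T * (2 : ℤ) ^ a = 2 ^ (p - a) * 2 ^ a := by
          have h2 : T * ((p : ℤ) + 1) = 2 ^ p := by rw [hgeom, hz]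
          rw [hpz] at h2
          rw [h2, ← pow_add]
          congr 1
          omega
        exact mul_right_cancel₀ (pow_ne_zero a two_ne_zero) h1
      -- parity contradiction in ZMod 2
      have hcast : ((T : ℤ) : ZMod 2) = 1 := by
        rw [hT]
        push_cast
        have hp2 : ((p : ℕ) : ZMod 2) = 1 := by
          rw [← ZMod.natCast_mod, Nat.odd_iff.mp hpo]; norm_num
        have hm1 : ((-1 : ZMod 2)) = 1 := by decide
        simp only [hp2, hm1, one_pow, one_mul, Finset.sum_const, Finset.card_range, nsmul_eq_mul, mul_one]
        rw [← ZMod.natCast_mod, Nat.odd_iff.mp hro]; norm_num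
      rw [hTval] at hcast
      have hzero : (((2 : ℤ) ^ (p - a) : ℤ) : ZMod 2) = 0 := by
        push_cast
        rw [show ((2 : ZMod 2)) = 0 by decide]
        exact zero_pow (by omega)
      rw [hzero] at hcast
      exact one_ne_zero hcast.symm

open scoped BigOperators

/-- **Refinement of Moulton's theorem.**
Let `2 ≤ p ≤ q` and let `α = (α₁,…,α_q)` be a tuple of nonzero complex numbers containing
an exponentially increasing subsequence of length `p` (given by distinct indices `ι`).
Then every subset-sum representation `β = (β₁,…,β_r)` of `α` (with all `β j` nonzero)
has length `r ≥ p / log₂ p`. -/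
theorem moulton_refinement (p q r : ℕ) (hp : 2 ≤ p) (hpq : p ≤ q)
    (α : Fin q → ℂ) (hα : ∀ i, α i ≠ 0)
    (ι : Fin p → Fin q) (hι : Function.Injective ι)
    (hexp : ∀ (j : ℕ) (hj : j + 1 < p),
      2 * ‖α (ι ⟨j, Nat.lt_of_succ_lt hj⟩)‖ ≤ ‖α (ι ⟨j + 1, hj⟩)‖)
    (β : Fin r → ℂ) (hβ : ∀ j, β j ≠ 0)
    (hrep : ∀ i : Fin q, ∃ R : Finset (Fin r), ∑ j ∈ R, β j = α i) :
    (p : ℝ) / Real.logb 2 p ≤ (r : ℝ) := by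
  classical
  choose R hR using hrep
  set w : Fin p → ℂ := fun j => α (ι j) with hw
  -- auxiliary real sequence
  set a : ℕ → ℝ := fun n => if h : n < p then ‖w ⟨n, h⟩‖ else 0 with ha
  have ha_nonneg : ∀ n, 0 ≤ a n := by
    intro n
    simp only [ha]
    split
    · exact norm_nonneg _
    · exact le_rfl
  have key : ∀ n, n < p → ∑ i ∈ Finset.range n, a i < a n := by
    intro n
    induction n with
    | zero =>
      intro h0
      simp only [Finset.range_zero, Finset.sum_empty, ha, dif_pos h0]
      exact norm_pos_iff.mpr (hα _)
    | succ n ih =>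
      intro hsucc
      have hn : n < p := Nat.lt_of_succ_lt hsucc
      have hstep := hexp n hsucc
      rw [Finset.sum_range_succ]
      have h1 : ∑ i ∈ Finset.range n, a i < a n := ih hn
      have h2 : a n = ‖w ⟨n, hn⟩‖ := by simp only [ha, dif_pos hn]
      have h3 : a (n + 1) = ‖w ⟨n + 1, hsucc⟩‖ := by simp only [ha, dif_pos hsucc]
      rw [h2, h3]
      have : 2 * ‖w ⟨n, hn⟩‖ ≤ ‖w ⟨n + 1, hsucc⟩‖ := hstep
      linarith [h1, h2 ▸ h1]
  have haval : ∀ j : Fin p, a j.val = ‖w j‖ := by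
    intro j
    simp only [ha, dif_pos j.isLt, Fin.eta]
  -- domination
  have dom : ∀ (M : Fin p) (D : Finset (Fin p)), (∀ j ∈ D, j < M) →
      ∑ j ∈ D, ‖w j‖ < ‖w M‖ := by
    intro M D hD
    have e1 : ∑ j ∈ D, ‖w j‖ = ∑ i ∈ D.image Fin.val, a i := by
      rw [Finset.sum_image (by intro x _ y _ hxy; exact Fin.val_injective hxy)]
      exact Finset.sum_congr rfl (fun j _ => (haval j).symm)
    rw [e1, ← haval M]
    calc ∑ i ∈ D.image Fin.val, a i
        ≤ ∑ i ∈ Finset.range M.val, a i := by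
          apply Finset.sum_le_sum_of_subset_of_nonneg
          · intro i hi
            obtain ⟨j, hj, rfl⟩ := Finset.mem_image.mp hi
            exact Finset.mem_range.mpr (hD j hj)
          · intro i _ _; exact ha_nonneg i
      _ < a M.val := key M.val M.isLt
  -- injectivity of subset sums
  have inj : ∀ A B : Finset (Fin p), ∑ j ∈ A, w j = ∑ j ∈ B, w j → A = B := by
    have aux : ∀ A B : Finset (Fin p), ∀ M, M ∈ A \ B →
        (∀ j ∈ (A \ B) ∪ (B \ A), j ≤ M) →
        ∑ j ∈ A, w j = ∑ j ∈ B, w j → False := by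
      intro A B M hM hmax hsum
      have h1 : ∑ j ∈ A \ B, w j = ∑ j ∈ B \ A, w j := by
        have e1 := Finset.sum_inter_add_sum_sdiff A B w
        have e2 := Finset.sum_inter_add_sum_sdiff B A w
        rw [Finset.inter_comm] at e2
        have : ∑ j ∈ A ∩ B, w j + ∑ j ∈ A \ B, w j
             = ∑ j ∈ A ∩ B, w j + ∑ j ∈ B \ A, w j := by
          rw [e1, e2, hsum]
        exact add_left_cancel this
      have hMv : w M = ∑ j ∈ B \ A, w j - ∑ j ∈ (A \ B).erase M, w j := by
        have e3 := Finset.sum_erase_add (A \ B) w hM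
        rw [← h1] at *
        linear_combination (Finset.sum_erase_add (A \ B) w hM) - h1
      set D : Finset (Fin p) := (B \ A) ∪ (A \ B).erase M with hD
      have hdisj : Disjoint (B \ A) ((A \ B).erase M) := by
        apply Finset.disjoint_of_subset_right (Finset.erase_subset _ _)
        rw [Finset.disjoint_left]
        intro x hx hx2
        exact (Finset.mem_sdiff.mp hx).2 (Finset.mem_sdiff.mp hx2).1
      have hDlt : ∀ j ∈ D, j < M := by
        intro j hj
        rcases Finset.mem_union.mp hj with hj1 | hj1
        · have hle : j ≤ M := hmax j (Finset.mem_union_right _ hj1)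
          rcases lt_or_eq_of_le hle with h | h
          · exact h
          · exfalso
            rw [h] at hj1
            exact (Finset.mem_sdiff.mp hM).2 (Finset.mem_sdiff.mp hj1).1
        · have hne := Finset.ne_of_mem_erase hj1
          have hle : j ≤ M := hmax j (Finset.mem_union_left _ (Finset.mem_of_mem_erase hj1))
          exact lt_of_le_of_ne hle hne
      have habs : ‖w M‖ ≤ ∑ j ∈ D, ‖w j‖ := by
        rw [hMv, hD, Finset.sum_union hdisj]
        calc ‖∑ j ∈ B \ A, w j - ∑ j ∈ (A \ B).erase M, w j‖
            ≤ ‖∑ j ∈ B \ A, w j‖ + ‖∑ j ∈ (A \ B).erase M, w j‖ := by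
              exact norm_sub_le _ _
          _ ≤ ∑ j ∈ B \ A, ‖w j‖ + ∑ j ∈ (A \ B).erase M, ‖w j‖ := by
              gcongr <;> exact norm_sum_le _ _
      exact absurd habs (not_le.mpr (dom M D hDlt))
    intro A B hsum
    by_contra hne
    have hnonempty : ((A \ B) ∪ (B \ A)).Nonempty := by
      rw [Finset.nonempty_iff_ne_empty]
      intro hemp
      rw [Finset.union_eq_empty] at hemp
      have hAB : A ⊆ B := Finset.sdiff_eq_empty_iff_subset.mp hemp.1
      have hBA : B ⊆ A := Finset.sdiff_eq_empty_iff_subset.mp hemp.2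
      exact hne (Finset.Subset.antisymm hAB hBA)
    set M := ((A \ B) ∪ (B \ A)).max' hnonempty with hM
    have hMmem := ((A \ B) ∪ (B \ A)).max'_mem hnonempty
    have hmax : ∀ j ∈ (A \ B) ∪ (B \ A), j ≤ M := fun j hj => Finset.le_max' _ j hj
    rcases Finset.mem_union.mp hMmem with h | h
    · exact absurd hsum (fun hs => aux A B M h hmax hs)
    · refine absurd hsum.symm (fun hs => aux B A M h ?_ hs)
      intro j hj
      apply hmax
      rwa [Finset.union_comm]
  -- coefficient map
  set c : Finset (Fin p) → (Fin r → ℕ) :=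
    fun A i => (A.filter (fun j => i ∈ R (ι j))).card with hc
  have hc_sum : ∀ A : Finset (Fin p), ∑ j ∈ A, w j = ∑ i : Fin r, (c A i : ℂ) * β i := by
    intro A
    have e1 : ∀ j : Fin p, w j = ∑ i : Fin r, if i ∈ R (ι j) then β i else 0 := by
      intro j
      rw [Finset.sum_ite_mem, Finset.univ_inter]
      exact (hR (ι j)).symm
    calc ∑ j ∈ A, w j = ∑ j ∈ A, ∑ i : Fin r, (if i ∈ R (ι j) then β i else 0) := by
          exact Finset.sum_congr rfl (fun j _ => e1 j)
      _ = ∑ i : Fin r, ∑ j ∈ A, (if i ∈ R (ι j) then β i else 0) := Finset.sum_comm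
      _ = ∑ i : Fin r, (c A i : ℂ) * β i := by
          apply Finset.sum_congr rfl
          intro i _
          rw [Finset.sum_ite, Finset.sum_const_zero, add_zero, Finset.sum_const, hc]
          simp [nsmul_eq_mul]
  -- counting
  have hcard : 2 ^ p - 1 ≤ p ^ r := by
    have hinj2 : Set.InjOn c ↑((Finset.univ : Finset (Finset (Fin p))).erase Finset.univ) := by
      intro A _ B _ hAB
      apply inj
      rw [hc_sum A, hc_sum B]
      rw [hAB]
    have hmem : ∀ A ∈ (Finset.univ : Finset (Finset (Fin p))).erase Finset.univ,
        c A ∈ Fintype.piFinset (fun _ : Fin r => Finset.range p) := by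
      intro A hA
      rw [Fintype.mem_piFinset]
      intro i
      rw [Finset.mem_range]
      have hAne : A ≠ Finset.univ := Finset.ne_of_mem_erase hA
      have hAcard : A.card < p := by
        have hss : A ⊂ Finset.univ := Finset.ssubset_univ_iff.mpr hAne
        have := Finset.card_lt_card hss
        simpa using this
      calc c A i ≤ A.card := Finset.card_filter_le _ _
        _ < p := hAcard
    have hle := Finset.card_le_card_of_injOn c hmem hinj2
    have e1 : ((Finset.univ : Finset (Finset (Fin p))).erase Finset.univ).card = 2 ^ p - 1 := by
      rw [Finset.card_erase_of_mem (Finset.mem_univ _)]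
      simp [Finset.card_univ]
    have e2 : (Fintype.piFinset (fun _ : Fin r => Finset.range p)).card = p ^ r := by
      rw [Fintype.card_piFinset]
      simp
    rw [e1, e2] at hle
    exact hle
  have hnat : 2 ^ p ≤ p ^ r := by
    have hne := moulton_two_pow_ne p r hp
    have h1 : 1 ≤ 2 ^ p := Nat.one_le_two_pow
    omega
  -- conclude
  have hp1 : (1 : ℝ) < (p : ℝ) := by exact_mod_cast hp
  have hlogpos : 0 < Real.logb 2 (p : ℝ) := Real.logb_pos one_lt_two hp1
  rw [div_le_iff₀ hlogpos]
  have hcastle : ((2 : ℝ)) ^ p ≤ ((p : ℝ)) ^ r := by exact_mod_cast hnat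
  have hlogle : Real.logb 2 ((2 : ℝ) ^ p) ≤ Real.logb 2 ((p : ℝ) ^ r) := by
    rw [Real.logb_le_logb one_lt_two (by positivity) (by positivity)]
    exact hcastle
  rw [Real.logb_pow, Real.logb_pow, Real.logb_self_eq_one one_lt_two] at hlogle
  · calc (p : ℝ) = (p : ℝ) * 1 := by ring
      _ ≤ (r : ℝ) * Real.logb 2 (p : ℝ) := by
          simpa using hlogle
end

section
/- Let n ≥ 1 and p ≥ 2 be integers and let ψ : 𝔽₂ⁿ → ℂ be a nonzero function. If there exist p distinct points x₁,…,x_p ∈ 𝔽₂ⁿ with ψ(x_j) ≠ 0 for all j and |ψ(x_{j+1})| ≥ 2·|ψ(x_j)| for all 1 ≤ j ≤ p−1, then χ(ψ) ≥ p / (4·log₂(p)). -/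
open scoped BigOperators Classical

noncomputable section

namespace StabPaper

/-- The space `𝔽₂ⁿ` of length-`n` bitstrings. -/
abbrev F2 (n : ℕ) := Fin n → ZMod 2

/-- `A ⊆ 𝔽₂ⁿ` is a (nonempty) affine linear subspace. -/
def IsAffineSubspace {n : ℕ} (A : Set (F2 n)) : Prop :=
  A.Nonempty ∧ ∀ x ∈ A, ∀ y ∈ A, ∀ z ∈ A, x + y + z ∈ A

/-- `l : 𝔽₂ⁿ → 𝔽₂` is a linear form. -/
def IsLinearForm {n : ℕ} (l : F2 n → ZMod 2) : Prop :=
  ∀ x y, l (x + y) = l x + l y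

/-- `q : 𝔽₂ⁿ → 𝔽₂` is a quadratic form (polynomial of degree at most 2
with vanishing constant term). -/
def IsQuadraticForm {n : ℕ} (q : F2 n → ZMod 2) : Prop :=
  q 0 = 0 ∧ ∀ x y z, q (x + y + z) = q (x + y) + q (x + z) + q (y + z) + q x + q y + q z

/-- A stabilizer state vector on `n` qubits. -/
def IsStabilizerState {n : ℕ} (σ : F2 n → ℂ) : Prop :=
  ∃ (A : Set (F2 n)) (l q : F2 n → ZMod 2),
    IsAffineSubspace A ∧ IsLinearForm l ∧ IsQuadraticForm q ∧
    ∀ x, σ x = if x ∈ A then Complex.I ^ (l x).val * (-1 : ℂ) ^ (q x).val else 0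

/-- A real stabilizer state vector on `n` qubits (the case `l = 0`). -/
def IsRealStabilizerState {n : ℕ} (σ : F2 n → ℂ) : Prop :=
  ∃ (A : Set (F2 n)) (q : F2 n → ZMod 2),
    IsAffineSubspace A ∧ IsQuadraticForm q ∧
    ∀ x, σ x = if x ∈ A then (-1 : ℂ) ^ (q x).val else 0

/-- The stabilizer rank: the least `r` such that `ψ` is a `ℂ`-linear combination of
`r` stabilizer state vectors. -/
def stabRank {n : ℕ} (ψ : F2 n → ℂ) : ℕ :=
  sInf {r : ℕ | ∃ (c : Fin r → ℂ) (σ : Fin r → (F2 n → ℂ)),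
    (∀ i, IsStabilizerState (σ i)) ∧ ψ = ∑ i, c i • σ i}

/-- The real stabilizer rank: the least `r` such that `ψ` is a `ℂ`-linear combination of
`r` real stabilizer state vectors. -/
def realStabRank {n : ℕ} (ψ : F2 n → ℂ) : ℕ :=
  sInf {r : ℕ | ∃ (c : Fin r → ℂ) (σ : Fin r → (F2 n → ℂ)),
    (∀ i, IsRealStabilizerState (σ i)) ∧ ψ = ∑ i, c i • σ i}

/-- The `n`-fold tensor power of a one-qubit vector `ψ : ℂ²`. -/
def tensorPow (ψ : ZMod 2 → ℂ) (n : ℕ) : F2 n → ℂ := fun x => ∏ i, ψ (x i)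

/-- The Euclidean norm on `ℂ^{𝔽₂ⁿ}`. -/
def l2norm {n : ℕ} (φ : F2 n → ℂ) : ℝ := Real.sqrt (∑ x, ‖φ x‖ ^ 2)

/-- The δ-approximate stabilizer rank. -/
def approxStabRank {n : ℕ} (δ : ℝ) (ψ : F2 n → ℂ) : ℕ :=
  sInf {r : ℕ | ∃ φ : F2 n → ℂ, φ ≠ 0 ∧
    l2norm (fun x => ((l2norm φ : ℝ) : ℂ)⁻¹ * φ x - ((l2norm ψ : ℝ) : ℂ)⁻¹ * ψ x) < δ ∧
    stabRank φ = r}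

/-- The one-qubit vector `a·e₀ + b·e₁ ∈ ℂ²`. -/
def qubit (a b : ℂ) : ZMod 2 → ℂ := fun x => if x = 0 then a else b

/-- A nonzero `ψ ∈ ℂ²` is a one-qubit stabilizer state vector iff it is proportional to
one of `e₀, e₁, e₀+e₁, e₀−e₁, e₀+i·e₁, e₀−i·e₁`. -/
def IsQubitStabVec (ψ : ZMod 2 → ℂ) : Prop :=
  ∃ c : ℂ, c ≠ 0 ∧ (ψ = c • qubit 1 0 ∨ ψ = c • qubit 0 1 ∨ ψ = c • qubit 1 1 ∨
    ψ = c • qubit 1 (-1) ∨ ψ = c • qubit 1 Complex.I ∨ ψ = c • qubit 1 (-Complex.I))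

/-- The `n`-th generic stabilizer rank `χ_n`. -/
def genStabRank (n : ℕ) : ℕ :=
  sSup {r : ℕ | ∃ ψ : ZMod 2 → ℂ, ψ ≠ 0 ∧ stabRank (tensorPow ψ n) = r}

/-- The `n`-th generic real stabilizer rank `χ_nℝ`. -/
def genRealStabRank (n : ℕ) : ℕ :=
  sSup {r : ℕ | ∃ ψ : ZMod 2 → ℂ, ψ ≠ 0 ∧ realStabRank (tensorPow ψ n) = r}


lemma stab_values {n : ℕ} {σ : F2 n → ℂ} (h : IsStabilizerState σ) (y : F2 n) :
    ∃ ev : ℤ × ℤ, |ev.1| ≤ 1 ∧ |ev.2| ≤ 1 ∧ σ y = (ev.1 : ℂ) + (ev.2 : ℂ) * Complex.I := by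
  obtain ⟨A, l, q, hA, hl, hq, hval⟩ := h
  by_cases hy : y ∈ A
  · have h1 : (l y).val = 0 ∨ (l y).val = 1 := by
      have := ZMod.val_lt (l y); omega
    have h2 : (q y).val = 0 ∨ (q y).val = 1 := by
      have := ZMod.val_lt (q y); omega
    rcases h1 with h1 | h1 <;> rcases h2 with h2 | h2
    · exact ⟨(1, 0), by norm_num, by norm_num, by simp [hval, hy, h1, h2]⟩
    · exact ⟨(-1, 0), by norm_num, by norm_num, by simp [hval, hy, h1, h2]⟩
    · exact ⟨(0, 1), by norm_num, by norm_num, by simp [hval, hy, h1, h2]⟩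
    · exact ⟨(0, -1), by norm_num, by norm_num, by simp [hval, hy, h1, h2]⟩
  · exact ⟨(0, 0), by norm_num, by norm_num, by simp [hval, hy]⟩

lemma stabSet_nonempty {n : ℕ} (ψ : F2 n → ℂ) :
    {r : ℕ | ∃ (c : Fin r → ℂ) (σ : Fin r → (F2 n → ℂ)),
      (∀ i, IsStabilizerState (σ i)) ∧ ψ = ∑ i, c i • σ i}.Nonempty := by
  classical
  let e := (Fintype.equivFin (F2 n)).symm
  refine ⟨Fintype.card (F2 n), fun i => ψ (e i), fun i y => if y = e i then 1 else 0, fun i => ?_, ?_⟩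
  · refine ⟨{e i}, 0, 0, ⟨⟨e i, rfl⟩, ?_⟩, by intro x y; simp, ⟨rfl, by intro x y z; simp⟩, ?_⟩
    · intro a ha b hb c hc
      simp only [Set.mem_singleton_iff] at ha hb hc ⊢
      subst ha; subst hb; subst hc
      funext k
      have : ∀ u : ZMod 2, u + u + u = u := by decide
      exact this _
    · intro y
      simp only [Pi.zero_apply, ZMod.val_zero, pow_zero, mul_one, Set.mem_singleton_iff]
  · funext y
    simp only [Finset.sum_apply, Pi.smul_apply, smul_eq_mul, mul_ite, mul_one, mul_zero]
    rw [Finset.sum_congr rfl (fun i _ => by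
      rw [show (if y = e i then ψ (e i) else 0) = (if i = e.symm y then ψ (e i) else 0) by
        by_cases h : y = e i
        · rw [if_pos h, if_pos (by simp [h])]
        · rw [if_neg h, if_neg (by simpa [Equiv.eq_symm_apply, eq_comm] using h)]])]
    rw [Finset.sum_ite_eq' Finset.univ (e.symm y) (fun i => ψ (e i))]
    simp

lemma key_count (p r : ℕ) (hp : 2 ≤ p) (hr : 4 * (r:ℝ) * Real.logb 2 p < p) :
    p ^ (4 * r) < 2 ^ p := by
  have hp1 : (1:ℝ) < (p:ℝ) := by exact_mod_cast hp.trans_lt' (by norm_num)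
  have hlog2 : (0:ℝ) < Real.log 2 := Real.log_pos (by norm_num)
  have hlogp : (0:ℝ) < Real.log p := Real.log_pos hp1
  have h : 4 * (r:ℝ) * Real.log p < (p:ℝ) * Real.log 2 := by
    rw [Real.logb] at hr
    calc 4*(r:ℝ)*Real.log p = (4*r*(Real.log p / Real.log 2)) * Real.log 2 := by
          field_simp
      _ < p * Real.log 2 := mul_lt_mul_of_pos_right hr hlog2
  have hR : ((p:ℝ)) ^ (4*r) < (2:ℝ) ^ p := by
    have e1 : ((p:ℝ))^(4*r) = Real.exp ((4*(r:ℝ)) * Real.log p) := by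
      rw [← Real.exp_log (pow_pos (by linarith) (4*r)), Real.log_pow]
      push_cast; ring_nf
    have e2 : (2:ℝ)^p = Real.exp ((p:ℝ) * Real.log 2) := by
      rw [← Real.exp_log (pow_pos two_pos p), Real.log_pow]
    rw [e1, e2]
    exact Real.exp_lt_exp.mpr (by linarith)
  exact_mod_cast hR

lemma growth_aux {p : ℕ} (v : Fin p → ℝ)
    (hstep : ∀ (j : ℕ) (hj : j + 1 < p), 2 * v ⟨j, Nat.lt_of_succ_lt hj⟩ ≤ v ⟨j + 1, hj⟩) :
    ∀ (k j : ℕ) (h : j + k < p), 2 ^ k * v ⟨j, by omega⟩ ≤ v ⟨j + k, h⟩ := by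
  intro k
  induction k with
  | zero => intro j h; simp
  | succ k ih =>
    intro j h
    have h1 : j + k < p := by omega
    have h2 : (j + k) + 1 < p := by omega
    calc (2:ℝ) ^ (k+1) * v ⟨j, by omega⟩ = 2 * (2^k * v ⟨j, by omega⟩) := by ring
      _ ≤ 2 * v ⟨j+k, h1⟩ := by linarith [ih j h1]
      _ ≤ v ⟨j+k+1, h2⟩ := hstep (j+k) h2
      _ = v ⟨j+(k+1), h⟩ := by congr 1

lemma geom_third : ∀ T : ℕ, ∑ j ∈ Finset.range T, (1/4:ℝ)^(j+1) ≤ 1/3 := by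
  have key : ∀ T : ℕ, ∑ j ∈ Finset.range T, (1/4:ℝ)^(j+1) = (1 - (1/4)^T)/3 := by
    intro T
    induction T with
    | zero => simp
    | succ T ih =>
      rw [Finset.sum_range_succ, ih]
      ring
  intro T
  rw [key]
  have : (0:ℝ) ≤ (1/4:ℝ)^T := by positivity
  linarith

lemma dot_bound (m : ℕ) (f g : Fin m → ℤ) (hf : ∀ t, |f t| ≤ 1) (hg : ∀ t, |g t| ≤ 1) :
    |∑ t, f t * g t| ≤ (m:ℤ) := by
  calc |∑ t, f t * g t| ≤ ∑ t, |f t * g t| := Finset.abs_sum_le_sum_abs _ _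
    _ ≤ ∑ _t : Fin m, (1:ℤ) := Finset.sum_le_sum (fun t _ => by
        rw [abs_mul]
        calc |f t| * |g t| ≤ 1*1 := mul_le_mul (hf t) (hg t) (abs_nonneg _) zero_le_one
          _ = 1 := by norm_num)
    _ = (m:ℤ) := by simp

set_option maxHeartbeats 1000000 in
lemma core (p r : ℕ) (hp5 : 5 ≤ p) (w : Fin p → ℂ) (c : Fin r → ℂ)
    (σv : Fin r → Fin p → ℂ)
    (hσv : ∀ (i : Fin r) (j : Fin p), ∃ ev : ℤ × ℤ, |ev.1| ≤ 1 ∧ |ev.2| ≤ 1 ∧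
      σv i j = (ev.1 : ℂ) + (ev.2 : ℂ) * Complex.I)
    (hw : ∀ j, w j = ∑ i, c i * σv i j)
    (hne : ∀ j, w j ≠ 0)
    (hexp : ∀ (j : ℕ) (hj : j + 1 < p),
      2 * ‖w ⟨j, Nat.lt_of_succ_lt hj⟩‖ ≤ ‖w ⟨j + 1, hj⟩‖)
    (hr4 : 4 * (r:ℝ) * Real.logb 2 p < p) : False := by
  have hp : 2 ≤ p := by omega
  -- selection of every other point
  set m : ℕ := (p-1)/2 + 1 with hmdef
  have hselp : ∀ t : Fin m, 2 * t.val < p := by intro t; have := t.2; omega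
  set sel : Fin m → Fin p := fun t => ⟨2 * t.val, hselp t⟩ with hseldef
  choose E hE1 hE2 hE3 using hσv
  -- the pigeonhole map
  set Φ : (Fin m → ℤ × ℤ) → (Fin r → ℤ × ℤ) := fun a i =>
    (∑ t, ((a t).1 * (E i (sel t)).1 - (a t).2 * (E i (sel t)).2),
     ∑ t, ((a t).1 * (E i (sel t)).2 + (a t).2 * (E i (sel t)).1)) with hΦdef
  set S : Finset (Fin m → ℤ × ℤ) :=
    Fintype.piFinset (fun _ => ({0,1} : Finset ℤ) ×ˢ ({0,1} : Finset ℤ)) with hSdef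
  set T : Finset (Fin r → ℤ × ℤ) :=
    Fintype.piFinset (fun _ => Finset.Icc (-(2*(m:ℤ))) (2*(m:ℤ)) ×ˢ Finset.Icc (-(2*(m:ℤ))) (2*(m:ℤ))) with hTdef
  have hScard : S.card = 4 ^ m := by
    rw [hSdef, Fintype.card_piFinset]
    have : (({0,1} : Finset ℤ) ×ˢ ({0,1} : Finset ℤ)).card = 4 := by
      rw [Finset.card_product]
      rw [show ({0,1} : Finset ℤ).card = 2 from by
        rw [Finset.card_insert_of_notMem (by norm_num), Finset.card_singleton]]
    simp [this]
  have hIcc : (Finset.Icc (-(2*(m:ℤ))) (2*(m:ℤ))).card = 4*m+1 := by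
    rw [Int.card_Icc]; omega
  have hTcard : T.card = (4*m+1) ^ (2*r) := by
    rw [hTdef, Fintype.card_piFinset]
    simp only [Finset.card_product, hIcc]
    rw [Finset.prod_const, Finset.card_univ, Fintype.card_fin, ← pow_two, ← pow_mul]
  have hcards : T.card < S.card := by
    rw [hScard, hTcard]
    have hmp : m ≤ p := by omega
    calc (4*m+1)^(2*r) ≤ (p^2)^(2*r) := Nat.pow_le_pow_left (by nlinarith [hmp, hp5]) _
      _ = p^(4*r) := by rw [← pow_mul]; ring_nf
      _ < 2^p := key_count p r hp hr4
      _ ≤ 2^(2*m) := Nat.pow_le_pow_right (by norm_num) (by omega)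
      _ = 4^m := by rw [pow_mul]; norm_num
  have hmaps : ∀ a ∈ S, Φ a ∈ T := by
    intro a ha
    rw [hSdef, Fintype.mem_piFinset] at ha
    rw [hTdef, Fintype.mem_piFinset]
    intro i
    have habs : ∀ t : Fin m, |(a t).1| ≤ 1 ∧ |(a t).2| ≤ 1 := by
      intro t
      have h := ha t
      rw [Finset.mem_product] at h
      obtain ⟨h1, h2⟩ := h
      simp only [Finset.mem_insert, Finset.mem_singleton] at h1 h2
      constructor
      · rcases h1 with h | h <;> simp [h]
      · rcases h2 with h | h <;> simp [h]
    have d1 := dot_bound m (fun t => (a t).1) (fun t => (E i (sel t)).1)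
      (fun t => (habs t).1) (fun t => hE1 i (sel t))
    have d2 := dot_bound m (fun t => (a t).2) (fun t => (E i (sel t)).2)
      (fun t => (habs t).2) (fun t => hE2 i (sel t))
    have d3 := dot_bound m (fun t => (a t).1) (fun t => (E i (sel t)).2)
      (fun t => (habs t).1) (fun t => hE2 i (sel t))
    have d4 := dot_bound m (fun t => (a t).2) (fun t => (E i (sel t)).1)
      (fun t => (habs t).2) (fun t => hE1 i (sel t))
    rw [Finset.mem_product]
    constructor
    · rw [Finset.mem_Icc, ← abs_le]
      simp only [hΦdef]
      rw [Finset.sum_sub_distrib]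
      calc |(∑ t, (a t).1 * (E i (sel t)).1) - (∑ t, (a t).2 * (E i (sel t)).2)|
          ≤ |∑ t, (a t).1 * (E i (sel t)).1| + |∑ t, (a t).2 * (E i (sel t)).2| := abs_sub _ _
        _ ≤ (m:ℤ) + (m:ℤ) := add_le_add d1 d2
        _ = 2*(m:ℤ) := by ring
    · rw [Finset.mem_Icc, ← abs_le]
      simp only [hΦdef]
      rw [Finset.sum_add_distrib]
      calc |(∑ t, (a t).1 * (E i (sel t)).2) + (∑ t, (a t).2 * (E i (sel t)).1)|
          ≤ |∑ t, (a t).1 * (E i (sel t)).2| + |∑ t, (a t).2 * (E i (sel t)).1| := abs_add_le _ _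
        _ ≤ (m:ℤ) + (m:ℤ) := add_le_add d3 d4
        _ = 2*(m:ℤ) := by ring
  obtain ⟨a, ha, a', ha', hane, heq⟩ := Finset.exists_ne_map_eq_of_card_lt_of_maps_to hcards hmaps
  -- the difference coefficients
  set b1 : Fin m → ℤ := fun t => (a t).1 - (a' t).1 with hb1def
  set b2 : Fin m → ℤ := fun t => (a t).2 - (a' t).2 with hb2def
  set β : Fin m → ℂ := fun t => (b1 t : ℂ) + (b2 t : ℂ) * Complex.I with hβdef
  have hrange : ∀ t : Fin m, |b1 t| ≤ 1 ∧ |b2 t| ≤ 1 := by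
    intro t
    rw [hSdef, Fintype.mem_piFinset] at ha ha'
    have h := ha t; have h' := ha' t
    rw [Finset.mem_product] at h h'
    simp only [Finset.mem_insert, Finset.mem_singleton] at h h'
    simp only [hb1def, hb2def]
    obtain ⟨e1, e2⟩ := h; obtain ⟨e1', e2'⟩ := h'
    constructor
    · rcases e1 with h | h <;> rcases e1' with h' | h' <;> simp [h, h']
    · rcases e2 with h | h <;> rcases e2' with h' | h' <;> simp [h, h']
  have hβabs : ∀ t, ‖β t‖ ≤ 2 := by
    intro t
    have hb1' : |(b1 t : ℝ)| ≤ 1 := by exact_mod_cast (hrange t).1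
    have hb2' : |(b2 t : ℝ)| ≤ 1 := by exact_mod_cast (hrange t).2
    calc ‖β t‖ ≤ ‖(b1 t : ℂ)‖ + ‖(b2 t : ℂ) * Complex.I‖ :=
          norm_add_le _ _
      _ = |(b1 t : ℝ)| + |(b2 t : ℝ)| := by
          rw [norm_mul, Complex.norm_I, mul_one, Complex.norm_intCast, Complex.norm_intCast]
      _ ≤ 1 + 1 := add_le_add hb1' hb2'
      _ = 2 := by norm_num
  -- the linear relation
  have hβsum : ∀ i : Fin r, ∑ t, β t * σv i (sel t) = 0 := by
    intro i
    have h12 := congrFun heq i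
    simp only [hΦdef] at h12
    have h1 := congrArg Prod.fst h12
    have h2 := congrArg Prod.snd h12
    simp only at h1 h2
    have e1 : (∑ t, (b1 t * (E i (sel t)).1 - b2 t * (E i (sel t)).2)) = 0 := by
      have hterm : ∀ t : Fin m, b1 t * (E i (sel t)).1 - b2 t * (E i (sel t)).2
          = ((a t).1 * (E i (sel t)).1 - (a t).2 * (E i (sel t)).2)
            - ((a' t).1 * (E i (sel t)).1 - (a' t).2 * (E i (sel t)).2) := by
        intro t; simp only [hb1def, hb2def]; ring
      rw [Finset.sum_congr rfl (fun t _ => hterm t), Finset.sum_sub_distrib, h1, sub_self]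
    have e2 : (∑ t, (b1 t * (E i (sel t)).2 + b2 t * (E i (sel t)).1)) = 0 := by
      have hterm : ∀ t : Fin m, b1 t * (E i (sel t)).2 + b2 t * (E i (sel t)).1
          = ((a t).1 * (E i (sel t)).2 + (a t).2 * (E i (sel t)).1)
            - ((a' t).1 * (E i (sel t)).2 + (a' t).2 * (E i (sel t)).1) := by
        intro t; simp only [hb1def, hb2def]; ring
      rw [Finset.sum_congr rfl (fun t _ => hterm t), Finset.sum_sub_distrib, h2, sub_self]
    calc ∑ t, β t * σv i (sel t)
        = ∑ t, (((b1 t * (E i (sel t)).1 - b2 t * (E i (sel t)).2 : ℤ) : ℂ)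
            + ((b1 t * (E i (sel t)).2 + b2 t * (E i (sel t)).1 : ℤ) : ℂ) * Complex.I) := by
          refine Finset.sum_congr rfl (fun t _ => ?_)
          rw [hE3 i (sel t)]
          simp only [hβdef]
          push_cast
          ring_nf
          rw [Complex.I_sq]
          ring
      _ = ((∑ t, (b1 t * (E i (sel t)).1 - b2 t * (E i (sel t)).2) : ℤ) : ℂ)
            + ((∑ t, (b1 t * (E i (sel t)).2 + b2 t * (E i (sel t)).1) : ℤ) : ℂ) * Complex.I := by
          rw [Finset.sum_add_distrib, ← Finset.sum_mul, Int.cast_sum, Int.cast_sum]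
      _ = 0 := by rw [e1, e2]; simp
  have htot : ∑ t, β t * w (sel t) = 0 := by
    calc ∑ t, β t * w (sel t) = ∑ t, ∑ i, β t * (c i * σv i (sel t)) := by
          refine Finset.sum_congr rfl (fun t _ => ?_)
          rw [hw (sel t), Finset.mul_sum]
      _ = ∑ i, ∑ t, β t * (c i * σv i (sel t)) := Finset.sum_comm
      _ = ∑ i, c i * ∑ t, β t * σv i (sel t) := by
          refine Finset.sum_congr rfl (fun i _ => ?_)
          rw [Finset.mul_sum]
          refine Finset.sum_congr rfl (fun t _ => ?_)
          ring
      _ = 0 := by simp [hβsum]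
  -- β is nonzero somewhere
  have hFne : (Finset.univ.filter (fun t => β t ≠ 0)).Nonempty := by
    obtain ⟨t, ht⟩ := Function.ne_iff.mp hane
    refine ⟨t, Finset.mem_filter.mpr ⟨Finset.mem_univ _, ?_⟩⟩
    intro h
    apply ht
    simp only [hβdef] at h
    rw [Complex.ext_iff] at h
    simp only [Complex.add_re, Complex.intCast_re, Complex.mul_re, Complex.intCast_im,
      Complex.I_re, Complex.I_im, Complex.add_im, Complex.mul_im, Complex.zero_re,
      Complex.zero_im, mul_zero, mul_one, zero_mul, add_zero, zero_add, sub_zero, zero_sub] at h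
    obtain ⟨h1', h2'⟩ := h
    have hb1z : b1 t = 0 := by exact_mod_cast h1'
    have hb2z : b2 t = 0 := by exact_mod_cast h2'
    simp only [hb1def, hb2def] at hb1z hb2z
    exact Prod.ext (sub_eq_zero.mp hb1z) (sub_eq_zero.mp hb2z)
  set tS := (Finset.univ.filter (fun t => β t ≠ 0)).max' hFne with htSdef
  have htSne : β tS ≠ 0 :=
    (Finset.mem_filter.mp ((Finset.univ.filter (fun t => β t ≠ 0)).max'_mem hFne)).2
  have hmaxle : ∀ t : Fin m, β t ≠ 0 → t ≤ tS := fun t ht =>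
    Finset.le_max' _ t (Finset.mem_filter.mpr ⟨Finset.mem_univ _, ht⟩)
  clear_value tS
  -- growth of magnitudes along selected points
  have hgrow := growth_aux (fun j : Fin p => ‖w j‖) hexp
  have hVle : ∀ t : Fin m, (t:ℕ) < (tS:ℕ) →
      ‖w (sel t)‖ ≤ (1/4:ℝ)^((tS:ℕ) - (t:ℕ)) * ‖w (sel tS)‖ := by
    intro t ht
    have hk : 2*(t:ℕ) + 2*((tS:ℕ) - (t:ℕ)) < p := by
      have := (sel tS).2
      simp only [hseldef] at this
      omega
    have hg := hgrow (2*((tS:ℕ) - (t:ℕ))) (2*(t:ℕ)) hk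
    have hidx : (⟨2*(t:ℕ) + 2*((tS:ℕ) - (t:ℕ)), hk⟩ : Fin p) = sel tS := by
      simp only [hseldef]
      exact Fin.ext (by simp; omega)
    rw [hidx] at hg
    have h4 : (2:ℝ)^(2*((tS:ℕ)-(t:ℕ))) = 4^((tS:ℕ)-(t:ℕ)) := by
      rw [pow_mul]; norm_num
    rw [h4] at hg
    have h4pos : (0:ℝ) < 4^((tS:ℕ)-(t:ℕ)) := by positivity
    rw [show ((1/4:ℝ))^((tS:ℕ)-(t:ℕ)) * ‖w (sel tS)‖
        = ‖w (sel tS)‖ / 4^((tS:ℕ)-(t:ℕ)) by rw [div_pow]; ring]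
    rw [le_div_iff₀ h4pos]
    calc ‖w (sel t)‖ * 4^((tS:ℕ)-(t:ℕ))
        = 4^((tS:ℕ)-(t:ℕ)) * ‖w ⟨2*(t:ℕ), hselp t⟩‖ := by
          simp only [hseldef]; ring
      _ ≤ ‖w (sel tS)‖ := hg
  -- final contradiction
  have hVpos : 0 < ‖w (sel tS)‖ := norm_pos_iff.mpr (hne (sel tS))
  have h1le : (1:ℝ) ≤ ‖β tS‖ := by
    have hnz : b1 tS ≠ 0 ∨ b2 tS ≠ 0 := by
      by_contra hcc
      push_neg at hcc
      apply htSne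
      simp only [hβdef, hcc.1, hcc.2]
      simp
    have hsq : (1:ℤ) ≤ b1 tS ^ 2 + b2 tS ^ 2 := by
      rcases hnz with h | h
      · have := Int.one_le_abs h
        nlinarith [sq_nonneg (b2 tS), sq_abs (b1 tS)]
      · have := Int.one_le_abs h
        nlinarith [sq_nonneg (b1 tS), sq_abs (b2 tS)]
    have hnsq : (1:ℝ) ≤ Complex.normSq (β tS) := by
      have : Complex.normSq (β tS) = (b1 tS : ℝ)^2 + (b2 tS : ℝ)^2 := by
        simp only [hβdef, Complex.normSq_apply, Complex.add_re, Complex.intCast_re,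
          Complex.mul_re, Complex.intCast_im, Complex.I_re, Complex.I_im, Complex.add_im,
          Complex.mul_im, mul_zero, mul_one, zero_mul, add_zero, zero_add, sub_zero, zero_sub]
        ring
      rw [this]
      exact_mod_cast hsq
    calc (1:ℝ) = Real.sqrt 1 := Real.sqrt_one.symm
      _ ≤ Real.sqrt (Complex.normSq (β tS)) := Real.sqrt_le_sqrt hnsq
      _ = ‖β tS‖ := (Complex.norm_def _).symm
  have hsplit := Finset.sum_erase_add Finset.univ (fun t => β t * w (sel t)) (Finset.mem_univ tS)
  rw [htot] at hsplit
  have hkey : ‖β tS‖ * ‖w (sel tS)‖ ≤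
      2/3 * ‖w (sel tS)‖ := by
    have hneg : β tS * w (sel tS) = -∑ t ∈ Finset.univ.erase tS, β t * w (sel t) := by
      linear_combination hsplit
    calc ‖β tS‖ * ‖w (sel tS)‖
        = ‖β tS * w (sel tS)‖ := (norm_mul _ _).symm
      _ = ‖∑ t ∈ Finset.univ.erase tS, β t * w (sel t)‖ := by rw [hneg, norm_neg]
      _ ≤ ∑ t ∈ Finset.univ.erase tS, ‖β t * w (sel t)‖ :=
          norm_sum_le _ _
      _ ≤ ∑ t ∈ Finset.univ.erase tS, (if (t:ℕ) < (tS:ℕ) then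
            (1/4:ℝ)^((tS:ℕ) - (t:ℕ)) * (2 * ‖w (sel tS)‖) else 0) := by
          refine Finset.sum_le_sum (fun t ht => ?_)
          have htne : t ≠ tS := Finset.ne_of_mem_erase ht
          by_cases hlt : (t:ℕ) < (tS:ℕ)
          · rw [if_pos hlt, norm_mul]
            calc ‖β t‖ * ‖w (sel t)‖
                ≤ 2 * ((1/4:ℝ)^((tS:ℕ) - (t:ℕ)) * ‖w (sel tS)‖) :=
                  mul_le_mul (hβabs t) (hVle t hlt) (norm_nonneg _) (by norm_num)
              _ = (1/4:ℝ)^((tS:ℕ) - (t:ℕ)) * (2 * ‖w (sel tS)‖) := by ring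
          · rw [if_neg hlt]
            have hβz : β t = 0 := by
              by_contra hb
              have hle := hmaxle t hb
              exact htne (Fin.ext (by omega))
            simp [hβz]
      _ ≤ ∑ t : Fin m, (if (t:ℕ) < (tS:ℕ) then
            (1/4:ℝ)^((tS:ℕ) - (t:ℕ)) * (2 * ‖w (sel tS)‖) else 0) := by
          refine Finset.sum_le_sum_of_subset_of_nonneg (Finset.erase_subset _ _) ?_
          intro t _ _
          split
          · positivity
          · exact le_refl 0
      _ = ∑ k ∈ Finset.range m, (if k < (tS:ℕ) then
            (1/4:ℝ)^((tS:ℕ) - k) * (2 * ‖w (sel tS)‖) else 0) :=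
          Fin.sum_univ_eq_sum_range
            (fun k => if k < (tS:ℕ) then (1/4:ℝ)^((tS:ℕ) - k) * (2 * ‖w (sel tS)‖) else 0) m
      _ = ∑ k ∈ Finset.range (tS:ℕ), (1/4:ℝ)^((tS:ℕ) - k) * (2 * ‖w (sel tS)‖) := by
          rw [← Finset.sum_filter]
          refine Finset.sum_congr ?_ (fun k _ => rfl)
          ext k
          simp only [Finset.mem_filter, Finset.mem_range]
          constructor
          · rintro ⟨_, hk⟩; exact hk
          · intro hk; exact ⟨hk.trans (tS.2), hk⟩
      _ = (∑ k ∈ Finset.range (tS:ℕ), (1/4:ℝ)^((tS:ℕ) - k)) * (2 * ‖w (sel tS)‖) := by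
          rw [Finset.sum_mul]
      _ = (∑ j ∈ Finset.range (tS:ℕ), (1/4:ℝ)^(j+1)) * (2 * ‖w (sel tS)‖) := by
          congr 1
          rw [← Finset.sum_range_reflect (fun j => (1/4:ℝ)^(j+1)) (tS:ℕ)]
          refine Finset.sum_congr rfl (fun k hk => ?_)
          have := Finset.mem_range.mp hk
          congr 1
          omega
      _ ≤ 1/3 * (2 * ‖w (sel tS)‖) :=
          mul_le_mul_of_nonneg_right (geom_third _) (by positivity)
      _ = 2/3 * ‖w (sel tS)‖ := by ring
  have : ‖w (sel tS)‖ ≤ 2/3 * ‖w (sel tS)‖ := by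
    calc ‖w (sel tS)‖ = 1 * ‖w (sel tS)‖ := (one_mul _).symm
      _ ≤ ‖β tS‖ * ‖w (sel tS)‖ :=
          mul_le_mul_of_nonneg_right h1le (norm_nonneg _)
      _ ≤ 2/3 * ‖w (sel tS)‖ := hkey
  linarith


/-- **Stabilizer-rank lower bound from exponentially increasing coordinates.**
If the coordinates of a nonzero `ψ : 𝔽₂ⁿ → ℂ` contain an exponentially increasing
subsequence of length `p ≥ 2` (at `p` distinct points), then `χ(ψ) ≥ p / (4·log₂ p)`. -/
theorem stabRank_lower_bound (n p : ℕ) (hn : 1 ≤ n) (hp : 2 ≤ p)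
    (ψ : F2 n → ℂ) (hψ : ψ ≠ 0)
    (x : Fin p → F2 n) (hx : Function.Injective x)
    (hne : ∀ j, ψ (x j) ≠ 0)
    (hexp : ∀ (j : ℕ) (hj : j + 1 < p),
      2 * ‖ψ (x ⟨j, Nat.lt_of_succ_lt hj⟩)‖ ≤
        ‖ψ (x ⟨j + 1, hj⟩)‖) :
    (p : ℝ) / (4 * Real.logb 2 p) ≤ (stabRank ψ : ℝ) := by
  by_contra hcon
  push_neg at hcon
  have hp1R : (1:ℝ) < (p:ℝ) := by exact_mod_cast hp.trans_lt' (by norm_num)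
  have hLpos : (0:ℝ) < Real.logb 2 p := Real.logb_pos one_lt_two hp1R
  have h4L : (0:ℝ) < 4 * Real.logb 2 p := by linarith
  have hmem : stabRank ψ ∈ {r : ℕ | ∃ (c : Fin r → ℂ) (σ : Fin r → (F2 n → ℂ)),
      (∀ i, IsStabilizerState (σ i)) ∧ ψ = ∑ i, c i • σ i} :=
    Nat.sInf_mem (stabSet_nonempty ψ)
  obtain ⟨c, σ, hσ, hdec⟩ := hmem
  have hr4 : 4 * ((stabRank ψ : ℕ):ℝ) * Real.logb 2 p < p := by
    have := (lt_div_iff₀ h4L).mp hcon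
    linarith
  have hr1 : 1 ≤ stabRank ψ := by
    by_contra hh
    push_neg at hh
    have h0 : stabRank ψ = 0 := by omega
    apply hψ
    haveI : IsEmpty (Fin (stabRank ψ)) := by rw [h0]; infer_instance
    rw [hdec, Finset.univ_eq_empty, Finset.sum_empty]
  by_cases hp4 : p ≤ 4
  · have h1L : (1:ℝ) ≤ Real.logb 2 p := by
      rw [show (1:ℝ) = Real.logb 2 2 by simp]
      exact Real.logb_le_logb_of_le (by norm_num) (by norm_num) (by exact_mod_cast hp)
    have hple : (p:ℝ) ≤ 4 * Real.logb 2 p := by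
      have : (p:ℝ) ≤ 4 := by exact_mod_cast hp4
      nlinarith
    have hd1 : (p:ℝ) / (4 * Real.logb 2 p) ≤ 1 := by
      rw [div_le_one h4L]; exact hple
    have hd2 : (1:ℝ) ≤ ((stabRank ψ : ℕ):ℝ) := by exact_mod_cast hr1
    linarith
  push_neg at hp4
  exact core p (stabRank ψ) (by omega) (fun j => ψ (x j)) c (fun i j => σ i (x j))
    (fun i j => stab_values (hσ i) (x j))
    (fun j => by
      conv_lhs => rw [hdec]
      simp [Finset.sum_apply])
    (fun j => hne j) hexp hr4


end StabPaper
end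
end

section
/- For every integer n ≥ 1, the explicit product state ψ_n satisfies χ(ψ_n) ≥ 2ⁿ / (4n). -/
open scoped BigOperators Classical

noncomputable section

namespace StabPaper

/-- The explicit product state `ψ_n = ⊗_{i=1}^n (e₀ + 2^{2^{i−1}} e₁)`,
i.e. `ψ_n(x) = 2^{Σ_{i=1}^n x_i·2^{i−1}}`. -/
def psiN (n : ℕ) : F2 n → ℂ :=
  fun x => (2 : ℂ) ^ (∑ i : Fin n, (x i).val * 2 ^ (i : ℕ))



/-- Injectivity of binary representations: subsets of `Fin N` are determined by `∑ 2^t`. -/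
lemma sum_two_pow_inj {N : ℕ} {A B : Finset (Fin N)}
    (h : ∑ t ∈ A, 2 ^ (t : ℕ) = ∑ t ∈ B, 2 ^ (t : ℕ)) : A = B := by
  classical
  have key : ∀ C : Finset (Fin N),
      ((finFunctionFinEquiv (fun t => if t ∈ C then (1 : Fin 2) else 0) : Fin (2 ^ N)) : ℕ)
        = ∑ t ∈ C, 2 ^ (t : ℕ) := by
    intro C
    rw [finFunctionFinEquiv_apply]
    have h0 : (∑ i : Fin N, (Fin.val (if i ∈ C then (1 : Fin 2) else 0)) * 2 ^ (i : ℕ))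
        = ∑ i : Fin N, (if i ∈ C then 2 ^ (i : ℕ) else 0) :=
      Finset.sum_congr rfl fun i _ => by by_cases hi : i ∈ C <;> simp [hi]
    rw [h0, Finset.sum_ite_mem, Finset.univ_inter]
  have h2 : (fun t => if t ∈ A then (1 : Fin 2) else 0)
      = (fun t => if t ∈ B then (1 : Fin 2) else 0) := by
    apply finFunctionFinEquiv.injective
    apply Fin.val_injective
    rw [key A, key B]; exact h
  ext t
  have ht := congrFun h2 t
  by_cases h1 : t ∈ A <;> by_cases hb : t ∈ B <;> simp_all

/-- Core counting lemma: if every power `2^t`, `t < N`, is a `{0,±1,±i}`-combination of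
fixed complex numbers `c_1,…,c_r`, then `2^N ≤ ((2N+1)(2N+1))^r`. -/
lemma core_s3 (N r : ℕ) (c : Fin r → ℂ) (u : Fin N → Fin r → ℂ)
    (a b : Fin N → Fin r → ℤ)
    (ha : ∀ t i, |a t i| ≤ 1) (hb : ∀ t i, |b t i| ≤ 1)
    (hu : ∀ t i, u t i = (a t i : ℂ) + (b t i : ℂ) * Complex.I)
    (heq : ∀ t : Fin N, ∑ i, c i * u t i = (2 : ℂ) ^ (t : ℕ)) :
    2 ^ N ≤ ((2 * N + 1) * (2 * N + 1)) ^ r := by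
  classical
  -- sums of subsets of the u's are pairwise distinct
  have hsum_inj : ∀ A B : Finset (Fin N),
      (∀ i, (∑ t ∈ A, a t i) = (∑ t ∈ B, a t i) ∧ (∑ t ∈ A, b t i) = (∑ t ∈ B, b t i)) →
      A = B := by
    intro A B h
    have husum : ∀ (C : Finset (Fin N)) (i : Fin r),
        ∑ t ∈ C, u t i = ((∑ t ∈ C, a t i : ℤ) : ℂ) + ((∑ t ∈ C, b t i : ℤ) : ℂ) * Complex.I := by
      intro C i
      rw [Finset.sum_congr rfl fun t _ => hu t i]
      push_cast
      rw [Finset.sum_add_distrib, ← Finset.sum_mul]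
    have hueq : ∀ i, ∑ t ∈ A, u t i = ∑ t ∈ B, u t i := by
      intro i
      rw [husum A i, husum B i, (h i).1, (h i).2]
    have hv : ∑ t ∈ A, (2 : ℂ) ^ (t : ℕ) = ∑ t ∈ B, (2 : ℂ) ^ (t : ℕ) := by
      have hAB : ∀ C : Finset (Fin N),
          ∑ t ∈ C, (2 : ℂ) ^ (t : ℕ) = ∑ i, c i * ∑ t ∈ C, u t i := by
        intro C
        calc ∑ t ∈ C, (2 : ℂ) ^ (t : ℕ)
            = ∑ t ∈ C, ∑ i, c i * u t i := Finset.sum_congr rfl fun t _ => (heq t).symm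
          _ = ∑ i, ∑ t ∈ C, c i * u t i := Finset.sum_comm
          _ = ∑ i, c i * ∑ t ∈ C, u t i := Finset.sum_congr rfl fun i _ => (Finset.mul_sum _ _ _).symm
      rw [hAB A, hAB B]
      exact Finset.sum_congr rfl fun i _ => by rw [hueq i]
    have hn' : ((∑ t ∈ A, 2 ^ (t : ℕ) : ℕ) : ℂ) = ((∑ t ∈ B, 2 ^ (t : ℕ) : ℕ) : ℂ) := by
      push_cast
      exact hv
    exact sum_two_pow_inj (Nat.cast_injective hn')
  -- the injection into a product of intervals
  set T := Finset.Icc (-(N : ℤ)) (N : ℤ) with hT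
  have hmem : ∀ (A : Finset (Fin N)) (g : Fin N → Fin r → ℤ) (hg : ∀ t i, |g t i| ≤ 1) (i : Fin r),
      (∑ t ∈ A, g t i) ∈ T := by
    intro A g hg i
    rw [hT, Finset.mem_Icc]
    have h1 : |∑ t ∈ A, g t i| ≤ (N : ℤ) := by
      calc |∑ t ∈ A, g t i| ≤ ∑ t ∈ A, |g t i| := Finset.abs_sum_le_sum_abs _ _
        _ ≤ ∑ _t ∈ A, (1 : ℤ) := Finset.sum_le_sum fun t _ => hg t i
        _ = (A.card : ℤ) := by simp
        _ ≤ (N : ℤ) := by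
            have := Finset.card_le_univ A
            simp only [Fintype.card_fin] at this ⊢
            exact_mod_cast this
    have := abs_le.mp h1
    exact ⟨this.1, this.2⟩
  let F : Finset (Fin N) → (Fin r → (T × T : Type)) := fun A i =>
    (⟨∑ t ∈ A, a t i, hmem A a ha i⟩, ⟨∑ t ∈ A, b t i, hmem A b hb i⟩)
  have hFinj : Function.Injective F := by
    intro A B hFeq
    apply hsum_inj
    intro i
    have h1 := congrFun hFeq i
    have h2 : (F A i).1.1 = (F B i).1.1 := by rw [h1]
    have h3 : (F A i).2.1 = (F B i).2.1 := by rw [h1]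
    exact ⟨h2, h3⟩
  have hcard := Fintype.card_le_of_injective F hFinj
  have hcardT : T.card = 2 * N + 1 := by rw [hT, Int.card_Icc]; omega
  rw [Fintype.card_finset, Fintype.card_fin, Fintype.card_fun, Fintype.card_prod,
    Fintype.card_coe, hcardT, Fintype.card_fin] at hcard
  exact hcard

/-- Arithmetic: the counting bound gives `2^n ≤ 4nr`. -/
lemma arith (n r : ℕ) (hn : 1 ≤ n)
    (h : 2 ^ (2 ^ n) ≤ ((2 * 2 ^ n + 1) * (2 * 2 ^ n + 1)) ^ r) : 2 ^ n ≤ 4 * n * r := by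
  have hr : 1 ≤ r := by
    rcases Nat.eq_zero_or_pos r with h0 | h0
    · subst h0
      simp only [pow_zero] at h
      have h1 : 1 ≤ 2 ^ n := Nat.one_le_two_pow
      have h2 : 2 ^ 1 ≤ 2 ^ (2 ^ n) := Nat.pow_le_pow_right (by norm_num) h1
      omega
    · exact h0
  rcases Nat.lt_or_ge n 2 with h2 | h2
  · interval_cases n
    omega
  · have h1n : 1 ≤ 2 ^ n := Nat.one_le_two_pow
    have hbnd : 2 * 2 ^ n + 1 ≤ 2 ^ (2 * n) := by
      have e1 : 2 * 2 ^ n + 1 ≤ 2 ^ (n + 2) := by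
        have : 2 ^ (n + 2) = 4 * 2 ^ n := by ring
        omega
      have e2 : 2 ^ (n + 2) ≤ 2 ^ (2 * n) := Nat.pow_le_pow_right (by norm_num) (by omega)
      omega
    have hchain : ((2 * 2 ^ n + 1) * (2 * 2 ^ n + 1)) ^ r ≤ 2 ^ (4 * n * r) := by
      calc ((2 * 2 ^ n + 1) * (2 * 2 ^ n + 1)) ^ r
          ≤ (2 ^ (2 * n) * 2 ^ (2 * n)) ^ r := Nat.pow_le_pow_left (Nat.mul_le_mul hbnd hbnd) r
        _ = 2 ^ (4 * n * r) := by rw [← pow_add, ← pow_mul]; congr 1; ring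
    have hfin : 2 ^ (2 ^ n) ≤ 2 ^ (4 * n * r) := le_trans h hchain
    exact (Nat.pow_le_pow_iff_right (by norm_num : 1 < 2)).mp hfin

/-- Values of a stabilizer state are `a + b i` with `a, b ∈ {-1,0,1}`. -/
lemma stab_vals {n : ℕ} {σ : F2 n → ℂ} (hσ : IsStabilizerState σ) (x : F2 n) :
    ∃ a b : ℤ, |a| ≤ 1 ∧ |b| ≤ 1 ∧ σ x = (a : ℂ) + (b : ℂ) * Complex.I := by
  obtain ⟨A, l, q, _hA, _hl, _hq, hval⟩ := hσ
  rw [hval x]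
  by_cases hx : x ∈ A
  · rw [if_pos hx]
    have hl2 : (l x).val < 2 := ZMod.val_lt _
    have hq2 : (q x).val < 2 := ZMod.val_lt _
    have hl' : (l x).val = 0 ∨ (l x).val = 1 := by omega
    have hq' : (q x).val = 0 ∨ (q x).val = 1 := by omega
    rcases hl' with h1 | h1 <;> rcases hq' with h2 | h2 <;> rw [h1, h2]
    · exact ⟨1, 0, by norm_num, by norm_num, by norm_num⟩
    · exact ⟨-1, 0, by norm_num, by norm_num, by norm_num⟩
    · exact ⟨0, 1, by norm_num, by norm_num, by norm_num⟩
    · exact ⟨0, -1, by norm_num, by norm_num, by push_cast; ring⟩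
  · exact ⟨0, 0, by norm_num, by norm_num, by rw [if_neg hx]; norm_num⟩

/-- A decomposition of `ψ_n` into `2^n` stabilizer states always exists. -/
lemma exists_decomp (n : ℕ) : ∃ (c : Fin (2 ^ n) → ℂ) (σ : Fin (2 ^ n) → (F2 n → ℂ)),
    (∀ i, IsStabilizerState (σ i)) ∧ psiN n = ∑ i, c i • σ i := by
  classical
  let e : (Fin n → ZMod 2) ≃ Fin (2 ^ n) := finFunctionFinEquiv
  refine ⟨fun t => psiN n (e.symm t),
    fun t => (fun x => if x = e.symm t then (1 : ℂ) else 0), fun t => ?_, ?_⟩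
  · refine ⟨{e.symm t}, fun _ => 0, fun _ => 0, ⟨⟨e.symm t, rfl⟩, ?_⟩, ?_, ⟨rfl, ?_⟩, ?_⟩
    · intro x hx y hy z hz
      simp only [Set.mem_singleton_iff] at hx hy hz ⊢
      subst hx; subst hy; subst hz
      have hz2 : ∀ v : ZMod 2, v + v + v = v := by decide
      funext i
      simp only [Pi.add_apply]
      exact hz2 _
    · intro x y; simp
    · intro x y z; simp
    · intro x
      by_cases hx : x = e.symm t <;>
        simp [hx, Set.mem_singleton_iff, ZMod.val_zero]
  · funext x
    have : (∑ i, (fun t => psiN n (e.symm t)) i •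
        (fun t => (fun y => if y = e.symm t then (1 : ℂ) else 0)) i) x
        = ∑ i : Fin (2 ^ n), psiN n (e.symm i) * (if x = e.symm i then (1 : ℂ) else 0) := by
      rw [Finset.sum_apply]
      exact Finset.sum_congr rfl fun i _ => rfl
    rw [this, Finset.sum_eq_single (e x)]
    · simp
    · intro i _ hi
      have hne : x ≠ e.symm i := by
        intro hcon
        exact hi (by rw [hcon, Equiv.apply_symm_apply])
      rw [if_neg hne, mul_zero]
    · intro hcon
      exact absurd (Finset.mem_univ _) hcon


/-- Any stabilizer decomposition of `ψ_n` with `r` terms satisfies `2^n ≤ 4nr`. -/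
lemma decomp_bound (n r : ℕ) (hn : 1 ≤ n) (c : Fin r → ℂ) (σs : Fin r → (F2 n → ℂ))
    (hstab : ∀ i, IsStabilizerState (σs i)) (hdec : psiN n = ∑ i, c i • σs i) :
    2 ^ n ≤ 4 * n * r := by
  classical
  have hx : ∀ x : F2 n, psiN n x = ∑ i, c i * σs i x := by
    intro x
    rw [hdec, Finset.sum_apply]
    exact Finset.sum_congr rfl fun i _ => by rw [Pi.smul_apply, smul_eq_mul]
  let e : (Fin n → ZMod 2) ≃ Fin (2 ^ n) := finFunctionFinEquiv
  have hme : ∀ x : F2 n, ((e x : ℕ)) = ∑ i, (x i).val * 2 ^ (i : ℕ) := by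
    intro x
    exact finFunctionFinEquiv_apply (m := 2) x
  choose a b ha hb hu using fun (t : Fin (2 ^ n)) (i : Fin r) => stab_vals (hstab i) (e.symm t)
  have heq : ∀ t : Fin (2 ^ n),
      ∑ i, c i * (fun (t : Fin (2 ^ n)) (i : Fin r) => σs i (e.symm t)) t i
        = (2 : ℂ) ^ (t : ℕ) := by
    intro t
    have h1 : ∑ i, c i * σs i (e.symm t) = psiN n (e.symm t) := (hx (e.symm t)).symm
    show ∑ i, c i * σs i (e.symm t) = (2 : ℂ) ^ (t : ℕ)
    rw [h1]
    show (2 : ℂ) ^ (∑ i, ((e.symm t) i).val * 2 ^ (i : ℕ)) = (2 : ℂ) ^ (t : ℕ)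
    congr 1
    rw [← hme (e.symm t), Equiv.apply_symm_apply]
  have hcount := core_s3 (2 ^ n) r c
    (fun t i => σs i (e.symm t)) a b ha hb hu heq
  exact arith n r hn hcount

/-- For every `n ≥ 1`, the explicit product state `ψ_n` satisfies `χ(ψ_n) ≥ 2ⁿ/(4n)`. -/
theorem psiN_stabRank_lower_bound (n : ℕ) (hn : 1 ≤ n) :
    ((2 : ℝ) ^ n) / (4 * n) ≤ (stabRank (psiN n) : ℝ) := by
  classical
  have hne : {r : ℕ | ∃ (c : Fin r → ℂ) (σ : Fin r → (F2 n → ℂ)),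
      (∀ i, IsStabilizerState (σ i)) ∧ psiN n = ∑ i, c i • σ i}.Nonempty :=
    ⟨2 ^ n, exists_decomp n⟩
  have hmem : ∃ (c : Fin (stabRank (psiN n)) → ℂ)
      (σ : Fin (stabRank (psiN n)) → (F2 n → ℂ)),
      (∀ i, IsStabilizerState (σ i)) ∧ psiN n = ∑ i, c i • σ i :=
    Nat.sInf_mem hne
  obtain ⟨c, σs, hstab, hdec⟩ := hmem
  have hnat : 2 ^ n ≤ 4 * n * stabRank (psiN n) :=
    decomp_bound n (stabRank (psiN n)) hn c σs hstab hdec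
  have h4 : (0 : ℝ) < 4 * n := by
    have h1 : (1 : ℝ) ≤ (n : ℝ) := by exact_mod_cast hn
    linarith
  rw [div_le_iff₀ h4]
  calc (2 : ℝ) ^ n = ((2 ^ n : ℕ) : ℝ) := by push_cast; ring
    _ ≤ ((4 * n * stabRank (psiN n) : ℕ) : ℝ) := by exact_mod_cast hnat
    _ = (stabRank (psiN n) : ℝ) * (4 * n) := by push_cast; ring

end StabPaper
end
end

section
/- For every real δ > 0 there exists a constant C (depending only on δ) such that for every integer n ≥ 1, the explicit product state ψ_n satisfies χ_δ(ψ_n) ≤ C. -/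
open scoped BigOperators Classical

noncomputable section

namespace StabPaper

/-! ### Auxiliary material for the proof -/

lemma zmod2_cases' (a : ZMod 2) : a = 0 ∨ a = 1 := by revert a; decide

lemma zmod2_add_one_one' (a : ZMod 2) : a + 1 + 1 = a := by revert a; decide

lemma isStabilizerState_single {n : ℕ} (z : F2 n) :
    IsStabilizerState (fun x => if x = z then (1:ℂ) else 0) := by
  refine ⟨{z}, 0, 0, ⟨⟨z, rfl⟩, ?_⟩, fun x y => by simp, ⟨rfl, fun x y w => by simp⟩, ?_⟩
  · intro x hx y hy w hw
    simp only [Set.mem_singleton_iff] at hx hy hw ⊢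
    rw [hx, hy, hw]
    have hz : z + z = 0 := by ext i; exact CharTwo.add_self_eq_zero (z i)
    rw [hz, zero_add]
  · intro x
    simp [Set.mem_singleton_iff]

lemma stabRank_le_card_support {n : ℕ} (f : F2 n → ℂ) :
    stabRank f ≤ (Finset.univ.filter (fun x => f x ≠ 0)).card := by
  apply Nat.sInf_le
  set S := Finset.univ.filter (fun x : F2 n => f x ≠ 0) with hS
  refine ⟨fun j => f (S.equivFin.symm j : F2 n),
    fun j => (fun x => if x = (S.equivFin.symm j : F2 n) then (1:ℂ) else 0),
    fun j => isStabilizerState_single _, ?_⟩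
  funext x
  rw [Finset.sum_apply]
  simp only [Pi.smul_apply, smul_eq_mul, mul_ite, mul_one, mul_zero]
  rw [Fintype.sum_equiv S.equivFin.symm _ (fun s => if x = (s:F2 n) then f s else 0) (fun j => rfl)]
  rw [Finset.sum_coe_sort S (fun y => if x = y then f y else 0), Finset.sum_ite_eq S x (fun y => f y)]
  by_cases hx : x ∈ S
  · simp [hx]
  · simp only [hx, if_false]
    by_contra h
    exact hx (Finset.mem_filter.mpr ⟨Finset.mem_univ _, fun h0 => (Ne.symm h) h0.symm⟩)

def mval {n : ℕ} (x : F2 n) : ℕ := ∑ i, (x i).val * 2 ^ (i:ℕ)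

def gR {n : ℕ} (x : F2 n) : ℝ := ((2:ℝ) ^ mval x) ^ 2

def Tset (k n : ℕ) : Finset (F2 n) :=
  Finset.univ.filter (fun x => ∀ i : Fin n, k ≤ (i:ℕ) → x i = 1)

def phiA (k n : ℕ) : F2 n → ℂ := fun x => if x ∈ Tset k n then psiN n x else 0

lemma gR_pos {n : ℕ} (x : F2 n) : 0 < gR x := by unfold gR; positivity

def bflip {n : ℕ} (i : Fin n) (x : F2 n) : F2 n := fun j => if j = i then x j + 1 else x j

lemma bflip_invol {n : ℕ} (i : Fin n) (x : F2 n) : bflip i (bflip i x) = x := by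
  funext j
  unfold bflip
  by_cases h : j = i
  · simp only [h, if_pos rfl]
    exact zmod2_add_one_one' _
  · simp only [if_neg h]

lemma bflip_inj {n : ℕ} (i : Fin n) : Function.Injective (bflip i) := by
  intro a b h
  rw [← bflip_invol i a, h, bflip_invol]

lemma mval_flip {n : ℕ} (i : Fin n) (x : F2 n) (hx : x i = 0) :
    mval (bflip i x) = mval x + 2 ^ (i:ℕ) := by
  unfold mval
  rw [← Finset.add_sum_erase Finset.univ _ (Finset.mem_univ i),
      ← Finset.add_sum_erase Finset.univ (fun j => (x j).val * 2 ^ (j:ℕ)) (Finset.mem_univ i)]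
  have h1 : (bflip i x i).val * 2 ^ (i:ℕ) = 2 ^ (i:ℕ) := by
    unfold bflip
    rw [if_pos rfl, hx, zero_add, ZMod.val_one, one_mul]
  have h2 : ∀ j ∈ Finset.univ.erase i,
      (bflip i x j).val * 2 ^ (j:ℕ) = (x j).val * 2 ^ (j:ℕ) := by
    intro j hj
    unfold bflip
    rw [if_neg (Finset.mem_erase.mp hj).1]
  rw [h1, Finset.sum_congr rfl h2, hx]
  simp [ZMod.val_zero]
  ring

lemma gR_flip {n : ℕ} (i : Fin n) (x : F2 n) (hx : x i = 0) :
    gR (bflip i x) = gR x * (4:ℝ) ^ (2 ^ (i:ℕ)) := by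
  unfold gR
  rw [mval_flip i x hx, pow_add, mul_pow]
  congr 1
  rw [← pow_mul, mul_comm (2 ^ (i:ℕ)) 2, pow_mul]
  norm_num

lemma flip_sum_le {n : ℕ} (i : Fin n) :
    ∑ x ∈ Finset.univ.filter (fun x : F2 n => x i = 0), gR x * (4:ℝ) ^ (2 ^ (i:ℕ))
      ≤ ∑ x : F2 n, gR x := by
  have h : ∑ x ∈ Finset.univ.filter (fun x : F2 n => x i = 0), gR x * (4:ℝ) ^ (2 ^ (i:ℕ))
      = ∑ x ∈ Finset.univ.filter (fun x : F2 n => x i = 0), gR (bflip i x) := by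
    apply Finset.sum_congr rfl
    intro x hx
    rw [gR_flip i x (Finset.mem_filter.mp hx).2]
  rw [h]
  have hinj : ∀ a ∈ Finset.univ.filter (fun x : F2 n => x i = 0),
      ∀ b ∈ Finset.univ.filter (fun x : F2 n => x i = 0),
      bflip i a = bflip i b → a = b := by
    intro a _ b _ h'; exact bflip_inj i h'
  rw [← Finset.sum_image hinj]
  apply Finset.sum_le_sum_of_subset_of_nonneg (Finset.subset_univ _)
  intro y _ _
  exact (gR_pos y).le

lemma cover_sum_le {n k : ℕ} :
    ∑ x ∈ Finset.univ.filter (fun x : F2 n => x ∉ Tset k n), gR x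
      ≤ ∑ i ∈ Finset.univ.filter (fun i : Fin n => k ≤ (i:ℕ)),
          ∑ x ∈ Finset.univ.filter (fun x : F2 n => x i = 0), gR x := by
  have step1 : ∀ x ∈ Finset.univ.filter (fun x : F2 n => x ∉ Tset k n),
      gR x ≤ ∑ i ∈ Finset.univ.filter (fun i : Fin n => k ≤ (i:ℕ)),
        (if x i = 0 then gR x else 0) := by
    intro x hx
    have hx' : x ∉ Tset k n := (Finset.mem_filter.mp hx).2
    have hex : ∃ i : Fin n, k ≤ (i:ℕ) ∧ x i = 0 := by
      by_contra h
      push_neg at h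
      exact hx' (Finset.mem_filter.mpr ⟨Finset.mem_univ _, fun i hi => by
        rcases zmod2_cases' (x i) with h0 | h1
        · exact absurd h0 (h i hi)
        · exact h1⟩)
    obtain ⟨i, hik, hi0⟩ := hex
    calc gR x = (if x i = 0 then gR x else 0) := by rw [if_pos hi0]
    _ ≤ _ := Finset.single_le_sum (f := fun i => if x i = 0 then gR x else 0)
        (fun j _ => by by_cases h : x j = 0 <;> simp [h, (gR_pos x).le])
        (Finset.mem_filter.mpr ⟨Finset.mem_univ _, hik⟩)
  calc ∑ x ∈ Finset.univ.filter (fun x : F2 n => x ∉ Tset k n), gR x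
      ≤ ∑ x ∈ Finset.univ.filter (fun x : F2 n => x ∉ Tset k n),
          ∑ i ∈ Finset.univ.filter (fun i : Fin n => k ≤ (i:ℕ)),
            (if x i = 0 then gR x else 0) := Finset.sum_le_sum step1
    _ = ∑ i ∈ Finset.univ.filter (fun i : Fin n => k ≤ (i:ℕ)),
          ∑ x ∈ Finset.univ.filter (fun x : F2 n => x ∉ Tset k n),
            (if x i = 0 then gR x else 0) := Finset.sum_comm
    _ ≤ _ := by
        apply Finset.sum_le_sum
        intro i _
        rw [← Finset.sum_filter]
        apply Finset.sum_le_sum_of_subset_of_nonneg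
        · intro x hx
          exact Finset.mem_filter.mpr ⟨Finset.mem_univ _, (Finset.mem_filter.mp hx).2⟩
        · intro y _ _; exact (gR_pos y).le

lemma geom_sum_eq (k : ℕ) : ∀ n, k ≤ n →
    ∑ j ∈ Finset.Ico k n, (2:ℝ)⁻¹ ^ (j+1) = 2⁻¹ ^ k - 2⁻¹ ^ n := by
  intro n
  induction n with
  | zero => intro h; interval_cases k; simp
  | succ n ih =>
    intro h
    rcases Nat.lt_or_ge k (n+1) with hk | hk
    · have hk' : k ≤ n := Nat.lt_succ_iff.mp hk
      rw [Finset.sum_Ico_succ_top hk', ih hk', pow_succ]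
      ring
    · have hkn : k = n + 1 := le_antisymm h hk
      subst hkn
      simp

lemma geom_sum_le (k n : ℕ) :
    ∑ j ∈ Finset.Ico k n, (2:ℝ)⁻¹ ^ (j+1) ≤ 2⁻¹ ^ k := by
  rcases le_or_gt k n with h | h
  · rw [geom_sum_eq k n h]
    have h0 : (0:ℝ) ≤ 2⁻¹ ^ n := by positivity
    linarith
  · rw [Finset.Ico_eq_empty (by omega), Finset.sum_empty]
    positivity

lemma inv_four_pow_le (i : ℕ) : ((4:ℝ) ^ (2 ^ i))⁻¹ ≤ (2:ℝ)⁻¹ ^ (i+1) := by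
  have h4 : (4:ℝ) ^ (2 ^ i) = 2 ^ (2 ^ (i+1)) := by
    have h42 : (4:ℝ) = 2 ^ 2 := by norm_num
    rw [h42, ← pow_mul, pow_succ, mul_comm (2^i) 2]
  rw [h4, ← inv_pow]
  exact pow_le_pow_of_le_one (by norm_num) (by norm_num) (Nat.lt_two_pow_self (n := i+1)).le

lemma tail_sum_le (k n : ℕ) :
    ∑ i ∈ Finset.univ.filter (fun i : Fin n => k ≤ (i:ℕ)), ((4:ℝ) ^ (2 ^ (i:ℕ)))⁻¹
      ≤ (2:ℝ)⁻¹ ^ k := by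
  calc ∑ i ∈ Finset.univ.filter (fun i : Fin n => k ≤ (i:ℕ)), ((4:ℝ) ^ (2 ^ (i:ℕ)))⁻¹
      ≤ ∑ i ∈ Finset.univ.filter (fun i : Fin n => k ≤ (i:ℕ)), (2:ℝ)⁻¹ ^ ((i:ℕ)+1) :=
        Finset.sum_le_sum (fun i _ => inv_four_pow_le (i:ℕ))
    _ = ∑ j ∈ (Finset.univ.filter (fun i : Fin n => k ≤ (i:ℕ))).image Fin.val,
          (2:ℝ)⁻¹ ^ (j+1) := by
        rw [Finset.sum_image (fun a _ b _ h => Fin.val_injective h)]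
    _ ≤ ∑ j ∈ Finset.Ico k n, (2:ℝ)⁻¹ ^ (j+1) := by
        apply Finset.sum_le_sum_of_subset_of_nonneg
        · intro j hj
          obtain ⟨i, hi, rfl⟩ := Finset.mem_image.mp hj
          exact Finset.mem_Ico.mpr ⟨(Finset.mem_filter.mp hi).2, i.isLt⟩
        · intro j _ _; positivity
    _ ≤ _ := geom_sum_le k n

lemma D_le_eps_W (k n : ℕ) :
    ∑ x ∈ Finset.univ.filter (fun x : F2 n => x ∉ Tset k n), gR x
      ≤ (2:ℝ)⁻¹ ^ k * ∑ x : F2 n, gR x := by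
  have hW : (0:ℝ) ≤ ∑ x : F2 n, gR x := Finset.sum_nonneg (fun x _ => (gR_pos x).le)
  calc ∑ x ∈ Finset.univ.filter (fun x : F2 n => x ∉ Tset k n), gR x
      ≤ ∑ i ∈ Finset.univ.filter (fun i : Fin n => k ≤ (i:ℕ)),
          ∑ x ∈ Finset.univ.filter (fun x : F2 n => x i = 0), gR x := cover_sum_le
    _ ≤ ∑ i ∈ Finset.univ.filter (fun i : Fin n => k ≤ (i:ℕ)),
          ((4:ℝ) ^ (2 ^ (i:ℕ)))⁻¹ * ∑ x : F2 n, gR x := by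
        apply Finset.sum_le_sum
        intro i _
        have h4 : (0:ℝ) < (4:ℝ) ^ (2 ^ (i:ℕ)) := by positivity
        rw [inv_mul_eq_div, le_div_iff₀ h4]
        calc (∑ x ∈ Finset.univ.filter (fun x : F2 n => x i = 0), gR x) * (4:ℝ) ^ (2 ^ (i:ℕ))
            = ∑ x ∈ Finset.univ.filter (fun x : F2 n => x i = 0),
                gR x * (4:ℝ) ^ (2 ^ (i:ℕ)) := by rw [Finset.sum_mul]
          _ ≤ _ := flip_sum_le i
    _ = (∑ i ∈ Finset.univ.filter (fun i : Fin n => k ≤ (i:ℕ)),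
          ((4:ℝ) ^ (2 ^ (i:ℕ)))⁻¹) * ∑ x : F2 n, gR x := by rw [Finset.sum_mul]
    _ ≤ _ := mul_le_mul_of_nonneg_right (tail_sum_le k n) hW

lemma mem_Tset_of_ne_zero {k n : ℕ} {z : F2 n} (hz : phiA k n z ≠ 0) : z ∈ Tset k n := by
  by_contra hc
  exact hz (by unfold phiA; rw [if_neg hc])

lemma card_support_phiA (k n : ℕ) :
    (Finset.univ.filter (fun x => phiA k n x ≠ 0)).card ≤ 2 ^ k := by
  have h : (Finset.univ.filter (fun x => phiA k n x ≠ 0)).card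
      ≤ (Finset.univ : Finset (Fin k → ZMod 2)).card := by
    have F : F2 n → (Fin k → ZMod 2) :=
      fun x => fun i => if h : (i:ℕ) < n then x ⟨(i:ℕ), h⟩ else 1
    apply Finset.card_le_card_of_injOn
      (fun x => (fun i => if h : (i:ℕ) < n then x ⟨(i:ℕ), h⟩ else 1 : Fin k → ZMod 2))
      (fun x _ => Finset.mem_univ _)
    intro x hx y hy hxy
    have hmem : ∀ z : F2 n, z ∈ ↑(Finset.univ.filter (fun x => phiA k n x ≠ 0)) →
        ∀ i : Fin n, k ≤ (i:ℕ) → z i = 1 := by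
      intro z hz i hi
      have hz' : z ∈ Tset k n :=
        mem_Tset_of_ne_zero (Finset.mem_filter.mp hz).2
      exact (Finset.mem_filter.mp hz').2 i hi
    funext i
    rcases Nat.lt_or_ge (i:ℕ) k with hik | hik
    · have h1 := congrFun hxy ⟨(i:ℕ), hik⟩
      simp only at h1
      rw [dif_pos i.isLt, dif_pos i.isLt] at h1
      simpa [Fin.eta] using h1
    · rw [hmem x hx i hik, hmem y hy i hik]
  calc (Finset.univ.filter (fun x => phiA k n x ≠ 0)).card
      ≤ (Finset.univ : Finset (Fin k → ZMod 2)).card := h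
    _ = 2 ^ k := by simp

def toE {n : ℕ} (f : F2 n → ℂ) : EuclideanSpace ℂ (F2 n) := WithLp.toLp 2 f

lemma l2norm_eq_norm {n : ℕ} (f : F2 n → ℂ) : l2norm f = ‖toE f‖ := by
  rw [EuclideanSpace.norm_eq]
  unfold l2norm
  congr 1

set_option maxHeartbeats 2000000

lemma abs_psiN_sq {n : ℕ} (x : F2 n) : ‖psiN n x‖ ^ 2 = gR x := by
  unfold psiN gR mval
  rw [norm_pow, Complex.norm_two]

/-- For every `δ > 0` there is a constant `C` (depending only on `δ`) such that for
every `n ≥ 1` the explicit product state `ψ_n` satisfies `χ_δ(ψ_n) ≤ C`. -/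
theorem psiN_approxStabRank_bounded (δ : ℝ) (hδ : 0 < δ) :
    ∃ C : ℕ, ∀ n : ℕ, 1 ≤ n → approxStabRank δ (psiN n) ≤ C := by
  obtain ⟨k, hk⟩ : ∃ k : ℕ, 8 / δ ^ 2 + 2 < 2 ^ k :=
    pow_unbounded_of_one_lt _ one_lt_two
  refine ⟨2 ^ k, fun n hn => ?_⟩
  set ψ := psiN n with hψdef
  set φ := phiA k n with hφdef
  set W := ∑ x : F2 n, gR x with hWdef
  set D := ∑ x ∈ Finset.univ.filter (fun x : F2 n => x ∉ Tset k n), gR x with hDdef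
  set B := ∑ x ∈ Tset k n, gR x with hBdef
  set ε := (2:ℝ)⁻¹ ^ k with hεdef
  have hε_pos : 0 < ε := by positivity
  have hεW : D ≤ ε * W := D_le_eps_W k n
  have h2kpos : (0:ℝ) < 2 ^ k := by positivity
  have h2k : (2:ℝ) < 2 ^ k := by
    have h8 : (0:ℝ) < 8 / δ ^ 2 := by positivity
    linarith
  have hεinv : ε = ((2:ℝ) ^ k)⁻¹ := by rw [hεdef, inv_pow]
  have hε_half : ε ≤ 1 / 2 := by
    rw [hεinv]
    calc ((2:ℝ) ^ k)⁻¹ ≤ 2⁻¹ := inv_anti₀ (by norm_num) h2k.le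
      _ = 1 / 2 := by norm_num
  have hεδ : 8 * ε < δ ^ 2 := by
    have h8 : 8 / δ ^ 2 < 2 ^ k := by linarith
    have h8' : 8 < 2 ^ k * δ ^ 2 := (div_lt_iff₀ (by positivity : (0:ℝ) < δ ^ 2)).mp h8
    rw [hεinv, mul_comm 8, inv_mul_eq_div, div_lt_iff₀ h2kpos]
    linarith [h8']
  have hBD : B + D = W := by
    rw [hBdef, hDdef, hWdef]
    have hT : ∑ x ∈ Tset k n, gR x
        = ∑ x ∈ Finset.univ.filter (fun x : F2 n => x ∈ Tset k n), gR x := by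
      congr 1
      ext x
      simp
    rw [hT, Finset.sum_filter_add_sum_filter_not]
  have htop : (fun _ => (1:ZMod 2)) ∈ Tset k n :=
    Finset.mem_filter.mpr ⟨Finset.mem_univ _, fun i _ => rfl⟩
  have hB_pos : 0 < B := Finset.sum_pos (fun x _ => gR_pos x) ⟨_, htop⟩
  have hD_nonneg : 0 ≤ D := Finset.sum_nonneg (fun x _ => (gR_pos x).le)
  have hW_pos : 0 < W := by rw [← hBD]; linarith
  have hBW : B ≤ W := by rw [← hBD]; linarith
  have hB_ge : (1 - ε) * W ≤ B := by
    have hBW' : B = W - D := by linarith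
    rw [hBW', sub_mul, one_mul]
    linarith
  -- pointwise absolute value computations
  have habs_φ : ∀ x, ‖φ x‖ ^ 2 = if x ∈ Tset k n then gR x else 0 := by
    intro x
    rw [hφdef]
    unfold phiA
    by_cases hx : x ∈ Tset k n
    · rw [if_pos hx, if_pos hx, abs_psiN_sq]
    · rw [if_neg hx, if_neg hx, norm_zero]
      norm_num
  have habs_sub : ∀ x, ‖ψ x - φ x‖ ^ 2 = if x ∉ Tset k n then gR x else 0 := by
    intro x
    rw [hφdef, hψdef]
    unfold phiA
    by_cases hx : x ∈ Tset k n
    · rw [if_pos hx, if_neg (by simpa using hx), sub_self, norm_zero]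
      norm_num
    · rw [if_neg hx, if_pos hx, sub_zero, abs_psiN_sq]
  have ha : l2norm ψ = Real.sqrt W := by
    unfold l2norm
    rw [Finset.sum_congr rfl (fun x _ => abs_psiN_sq x)]
  have hb : l2norm φ = Real.sqrt B := by
    unfold l2norm
    rw [Finset.sum_congr rfl (fun x _ => habs_φ x), ← Finset.sum_filter]
    congr 2
    ext x
    simp
  have hsub : ‖toE ψ - toE φ‖ = Real.sqrt D := by
    rw [EuclideanSpace.norm_eq]
    congr 1
    have hce : ∀ x : F2 n, ‖(toE ψ - toE φ) x‖ ^ 2 = ‖ψ x - φ x‖ ^ 2 := by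
      intro x
      rfl
    rw [Finset.sum_congr rfl (fun x _ => hce x),
      Finset.sum_congr rfl (fun x _ => habs_sub x), ← Finset.sum_filter]
  -- φ is nonzero
  have hφ0 : φ ≠ 0 := by
    intro hc
    have h1 : φ (fun _ => 1) = psiN n (fun _ => 1) := by
      rw [hφdef]; unfold phiA; rw [if_pos htop]
    have h2 : psiN n (fun _ => 1) ≠ 0 := by
      unfold psiN
      exact pow_ne_zero _ two_ne_zero
    rw [hc] at h1
    exact h2 (by simpa using h1.symm)
  -- square root facts
  set sW := Real.sqrt W with hsWdef
  set sB := Real.sqrt B with hsBdef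
  set sD := Real.sqrt D with hsDdef
  have hsW_pos : 0 < sW := Real.sqrt_pos.mpr hW_pos
  have hsB_pos : 0 < sB := Real.sqrt_pos.mpr hB_pos
  have hsD_nonneg : 0 ≤ sD := Real.sqrt_nonneg D
  have hsBW : sB ≤ sW := Real.sqrt_le_sqrt hBW
  have hsW_sq : sW ^ 2 = W := Real.sq_sqrt hW_pos.le
  have hsB_sq : sB ^ 2 = B := Real.sq_sqrt hB_pos.le
  have hsD_sq : sD ^ 2 = D := Real.sq_sqrt hD_nonneg
  have key1 : sW ≤ sB + sD := by
    have hWle : W ≤ (sB + sD) ^ 2 := by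
      have hexp : (sB + sD) ^ 2 = B + D + 2 * (sB * sD) := by
        rw [add_sq, hsB_sq, hsD_sq]; ring
      rw [hexp]
      linarith [mul_nonneg hsB_pos.le hsD_nonneg]
    calc sW ≤ Real.sqrt ((sB + sD) ^ 2) := Real.sqrt_le_sqrt hWle
      _ = sB + sD := Real.sqrt_sq (by positivity)
  -- distance bound
  have hdist : l2norm (fun x => ((l2norm φ : ℝ) : ℂ)⁻¹ * φ x
      - ((l2norm ψ : ℝ) : ℂ)⁻¹ * ψ x) < δ := by
    rw [l2norm_eq_norm]
    have hEeq : toE (fun x => ((l2norm φ : ℝ) : ℂ)⁻¹ * φ x - ((l2norm ψ : ℝ) : ℂ)⁻¹ * ψ x)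
        = ((l2norm φ : ℝ) : ℂ)⁻¹ • toE φ - ((l2norm ψ : ℝ) : ℂ)⁻¹ • toE ψ := rfl
    rw [hEeq, hb, ha]
    have hnu : ‖toE ψ‖ = sW := by rw [← l2norm_eq_norm, ha]
    have hvu : ‖toE φ - toE ψ‖ = sD := by rw [norm_sub_rev]; exact hsub
    have hcnorm : ‖((sB : ℝ) : ℂ)⁻¹‖ = sB⁻¹ := by
      rw [norm_inv, Complex.norm_real, Real.norm_eq_abs, abs_of_pos hsB_pos]
    have hcd : ‖((sB : ℝ) : ℂ)⁻¹ - ((sW : ℝ) : ℂ)⁻¹‖ = sB⁻¹ - sW⁻¹ := by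
      have hcast : ((sB : ℝ) : ℂ)⁻¹ - ((sW : ℝ) : ℂ)⁻¹ = ((sB⁻¹ - sW⁻¹ : ℝ) : ℂ) := by
        push_cast
        ring
      rw [hcast, Complex.norm_real, Real.norm_eq_abs, abs_of_nonneg]
      have : sW⁻¹ ≤ sB⁻¹ := inv_anti₀ hsB_pos hsBW
      linarith
    calc ‖((sB : ℝ) : ℂ)⁻¹ • toE φ - ((sW : ℝ) : ℂ)⁻¹ • toE ψ‖
        ≤ ‖((sB : ℝ) : ℂ)⁻¹ • toE φ - ((sB : ℝ) : ℂ)⁻¹ • toE ψ‖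
          + ‖((sB : ℝ) : ℂ)⁻¹ • toE ψ - ((sW : ℝ) : ℂ)⁻¹ • toE ψ‖ :=
        norm_sub_le_norm_sub_add_norm_sub _ _ _
      _ = sB⁻¹ * sD + (sB⁻¹ - sW⁻¹) * sW := by
          rw [← smul_sub, ← sub_smul, norm_smul, norm_smul, hcnorm, hcd, hvu, hnu]
      _ ≤ 2 * sD / sB := by
          rw [div_eq_mul_inv]
          have h5 : sW⁻¹ * sW = 1 := inv_mul_cancel₀ hsW_pos.ne'
          have h7 : sB⁻¹ * sB = 1 := inv_mul_cancel₀ hsB_pos.ne'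
          have h6 : sB⁻¹ * sW ≤ 1 + sB⁻¹ * sD := by
            calc sB⁻¹ * sW ≤ sB⁻¹ * (sB + sD) :=
                  mul_le_mul_of_nonneg_left key1 (by positivity)
              _ = 1 + sB⁻¹ * sD := by rw [mul_add, h7]
          have h8 : (sB⁻¹ - sW⁻¹) * sW = sB⁻¹ * sW - 1 := by
            rw [sub_mul, inv_mul_cancel₀ hsW_pos.ne']
          rw [h8]
          linarith
      _ < δ := by
          rw [div_lt_iff₀ hsB_pos]
          have hsq : (2 * sD) ^ 2 < (δ * sB) ^ 2 := by
            have e1 : (2 * sD) ^ 2 = 4 * D := by rw [mul_pow, hsD_sq]; ring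
            have e2 : (δ * sB) ^ 2 = δ ^ 2 * B := by rw [mul_pow, hsB_sq]
            rw [e1, e2]
            have c1 : 4 * D ≤ 4 * (ε * W) := by linarith
            have c2 : 8 * (ε * W) < δ ^ 2 * W := by
              have := mul_lt_mul_of_pos_right hεδ hW_pos
              linarith
            have c3 : δ ^ 2 * ε * W ≤ δ ^ 2 * (1/2) * W := by
              have hc := mul_le_mul_of_nonneg_right
                (mul_le_mul_of_nonneg_left hε_half (sq_nonneg δ)) hW_pos.le
              linarith
            have c4 : δ ^ 2 * ((1 - ε) * W) ≤ δ ^ 2 * B :=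
              mul_le_mul_of_nonneg_left hB_ge (sq_nonneg δ)
            have c5 : δ ^ 2 * ((1 - ε) * W) = δ ^ 2 * W - δ ^ 2 * ε * W := by ring
            linarith
          exact lt_of_pow_lt_pow_left₀ 2 (by positivity) hsq
  have happrox : approxStabRank δ (psiN n) ≤ stabRank φ :=
    Nat.sInf_le ⟨φ, hφ0, hdist, rfl⟩
  calc approxStabRank δ (psiN n) ≤ stabRank φ := happrox
    _ ≤ (Finset.univ.filter (fun x => φ x ≠ 0)).card := stabRank_le_card_support φ
    _ ≤ 2 ^ k := card_support_phiA k n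

end StabPaper
end
end

section
/- Let α ∈ ℂ be nonzero and transcendental over ℚ. Then the two-qubit state ψ_α satisfies χ(ψ_α) = 2 and χ(ψ_α ⊗ ψ_α) = 4. -/
open scoped BigOperators Classical

noncomputable section

namespace StabPaper

/-- The two-qubit state `ψ_α` with `ψ_α(00) = 1`, `ψ_α(01) = ψ_α(10) = α`, `ψ_α(11) = 0`. -/
def psiAlpha (α : ℂ) : F2 2 → ℂ := fun x =>
  if x 0 = 0 ∧ x 1 = 0 then 1 else if x 0 = 1 ∧ x 1 = 1 then 0 else α

/-- The tensor product of two two-qubit states, as a four-qubit state. -/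
def tensor2 (φ ρ : F2 2 → ℂ) : F2 4 → ℂ := fun x =>
  φ (fun i => x (Fin.castAdd 2 i)) * ρ (fun j => x (Fin.natAdd 2 j))

/-! ### Auxiliary development -/

open Polynomial in
lemma zmod2 : ∀ a : ZMod 2, a = 0 ∨ a = 1 := by decide

/-- The Gaussian rationals `ℚ(i)` as a subfield of `ℂ`. -/
def Kg : Subfield ℂ where
  carrier := {z | ∃ p q : ℚ, z = (p : ℂ) + (q : ℂ) * Complex.I}
  zero_mem' := ⟨0, 0, by norm_num⟩
  one_mem' := ⟨1, 0, by norm_num⟩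
  add_mem' := by
    rintro a b ⟨p, q, rfl⟩ ⟨r, s, rfl⟩
    exact ⟨p + r, q + s, by push_cast; ring⟩
  neg_mem' := by
    rintro a ⟨p, q, rfl⟩
    exact ⟨-p, -q, by push_cast; ring⟩
  mul_mem' := by
    rintro a b ⟨p, q, rfl⟩ ⟨r, s, rfl⟩
    refine ⟨p * r - q * s, p * s + q * r, ?_⟩
    push_cast
    linear_combination ((q : ℂ) * (s : ℂ)) * Complex.I_sq
  inv_mem' := by
    rintro a ⟨p, q, rfl⟩
    by_cases h : ((p : ℂ) + (q : ℂ) * Complex.I) = 0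
    · exact ⟨0, 0, by rw [h, inv_zero]; norm_num⟩
    · have hn : (p ^ 2 + q ^ 2 : ℚ) ≠ 0 := by
        intro h0
        have hp : p = 0 := by nlinarith [sq_nonneg p, sq_nonneg q]
        have hq : q = 0 := by nlinarith [sq_nonneg p, sq_nonneg q]
        apply h
        rw [hp, hq]
        norm_num
      refine ⟨p / (p ^ 2 + q ^ 2), -(q / (p ^ 2 + q ^ 2)), ?_⟩
      have hnC : ((p : ℂ) ^ 2 + (q : ℂ) ^ 2) ≠ 0 := by
        intro h0
        apply hn
        have : (((p ^ 2 + q ^ 2 : ℚ)) : ℂ) = 0 := by push_cast; exact h0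
        exact_mod_cast this
      apply inv_eq_of_mul_eq_one_right
      push_cast
      field_simp
      linear_combination (-(q : ℂ) ^ 2) * Complex.I_sq

lemma I_mem_Kg : Complex.I ∈ Kg := ⟨0, 1, by norm_num⟩

lemma stabVal_mem_Kg {n : ℕ} {σ : F2 n → ℂ} (h : IsStabilizerState σ) (x : F2 n) :
    σ x ∈ Kg := by
  obtain ⟨A, l, q, _, _, _, hform⟩ := h
  rw [hform x]
  split
  · exact Kg.mul_mem (pow_mem I_mem_Kg _) (pow_mem (Kg.neg_mem Kg.one_mem) _)
  · exact Kg.zero_mem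

lemma sq_sum_eq_zero {p q : ℚ} (h : p ^ 2 + q ^ 2 = 0) : p = 0 ∧ q = 0 :=
  ⟨by nlinarith [sq_nonneg p, sq_nonneg q], by nlinarith [sq_nonneg p, sq_nonneg q]⟩

/-- `1, α, α²` are linearly independent over the Gaussian rationals when `α` is
transcendental over `ℚ`. -/
lemma gauss_indep {α : ℂ} (ht : Transcendental ℚ α) {a b c : ℂ}
    (ha : a ∈ Kg) (hb : b ∈ Kg) (hc : c ∈ Kg) (h : a + b * α + c * α ^ 2 = 0) :
    a = 0 ∧ b = 0 ∧ c = 0 := by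
  obtain ⟨p0, q0, rfl⟩ := ha
  obtain ⟨p1, q1, rfl⟩ := hb
  obtain ⟨p2, q2, rfl⟩ := hc
  have key : ((p0 ^ 2 + q0 ^ 2 : ℚ) : ℂ) + ((2 * (p0 * p1 + q0 * q1) : ℚ) : ℂ) * α
      + ((2 * (p0 * p2 + q0 * q2) + p1 ^ 2 + q1 ^ 2 : ℚ) : ℂ) * α ^ 2
      + ((2 * (p1 * p2 + q1 * q2) : ℚ) : ℂ) * α ^ 3
      + ((p2 ^ 2 + q2 ^ 2 : ℚ) : ℂ) * α ^ 4 = 0 := by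
    push_cast
    linear_combination (((p0 : ℂ) - (q0 : ℂ) * Complex.I)
        + ((p1 : ℂ) - (q1 : ℂ) * Complex.I) * α
        + ((p2 : ℂ) - (q2 : ℂ) * Complex.I) * α ^ 2) * h
      + ((q0 : ℂ) + (q1 : ℂ) * α + (q2 : ℂ) * α ^ 2) ^ 2 * Complex.I_sq
  set P : Polynomial ℚ :=
    Polynomial.C (p0 ^ 2 + q0 ^ 2) + Polynomial.C (2 * (p0 * p1 + q0 * q1)) * Polynomial.X ^ 1
      + Polynomial.C (2 * (p0 * p2 + q0 * q2) + p1 ^ 2 + q1 ^ 2) * Polynomial.X ^ 2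
      + Polynomial.C (2 * (p1 * p2 + q1 * q2)) * Polynomial.X ^ 3
      + Polynomial.C (p2 ^ 2 + q2 ^ 2) * Polynomial.X ^ 4 with hP
  have hev : Polynomial.aeval α P = 0 := by
    rw [hP]
    simp only [map_add, map_mul, map_pow, Polynomial.aeval_C, Polynomial.aeval_X]
    push_cast at key ⊢
    simp only [eq_ratCast, Rat.cast_add, Rat.cast_mul, Rat.cast_pow, Rat.cast_ofNat]
    push_cast
    linear_combination key
  have hP0 : P = 0 := by
    by_contra hne
    exact ht ⟨P, hne, hev⟩
  have hc4 : p2 ^ 2 + q2 ^ 2 = 0 := by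
    have h4 := congrArg (fun f => Polynomial.coeff f 4) hP0
    simp only [hP, Polynomial.coeff_add, Polynomial.coeff_C_mul, Polynomial.coeff_X_pow,
      Polynomial.coeff_C, Polynomial.coeff_zero] at h4
    simpa using h4
  obtain ⟨hp2, hq2⟩ := sq_sum_eq_zero hc4
  have hc2 : 2 * (p0 * p2 + q0 * q2) + p1 ^ 2 + q1 ^ 2 = 0 := by
    have h2 := congrArg (fun f => Polynomial.coeff f 2) hP0
    simp only [hP, Polynomial.coeff_add, Polynomial.coeff_C_mul, Polynomial.coeff_X_pow,
      Polynomial.coeff_C, Polynomial.coeff_zero] at h2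
    simpa using h2
  rw [hp2, hq2] at hc2
  have hc2' : p1 ^ 2 + q1 ^ 2 = 0 := by linarith
  obtain ⟨hp1, hq1⟩ := sq_sum_eq_zero hc2'
  have hc0 : p0 ^ 2 + q0 ^ 2 = 0 := by
    have h0 := congrArg (fun f => Polynomial.coeff f 0) hP0
    simp only [hP, Polynomial.coeff_add, Polynomial.coeff_C_mul, Polynomial.coeff_X_pow,
      Polynomial.coeff_C, Polynomial.coeff_zero] at h0
    simpa using h0
  obtain ⟨hp0, hq0⟩ := sq_sum_eq_zero hc0
  refine ⟨?_, ?_, ?_⟩ <;> simp [hp0, hq0, hp1, hq1, hp2, hq2]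


set_option synthInstance.maxHeartbeats 1000000 in
set_option maxHeartbeats 1000000 in
/-- Duality over a subfield: if every `K`-linear functional killing `σ₀, σ₁, σ₂` kills `w`,
and all entries lie in `K`, then `w` is a `ℂ`-linear combination of the `σᵢ`. -/
lemma dual_key {ι : Type} [Fintype ι] [DecidableEq ι] (K : Subfield ℂ)
    (σ : Fin 3 → ι → ℂ) (hσ : ∀ i x, σ i x ∈ K) (w : ι → ℂ) (hw : ∀ x, w x ∈ K)
    (h : ∀ g : ι → K, (∀ i, ∑ x, σ i x * (g x : ℂ) = 0) → ∑ x, w x * (g x : ℂ) = 0) :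
    ∃ d : Fin 3 → ℂ, w = ∑ i, d i • σ i := by
  classical
  set σ' : Fin 3 → ι → K := fun i x => ⟨σ i x, hσ i x⟩ with hσ'def
  set w' : ι → K := fun x => ⟨w x, hw x⟩ with hw'def
  have hcoeσ : ∀ i x, ((σ' i x : K) : ℂ) = σ i x := fun _ _ => rfl
  have hcoew : ∀ x, ((w' x : K) : ℂ) = w x := fun _ => rfl
  have hmem : w' ∈ Submodule.span K (Set.range σ') := by
    by_contra hn
    set W : Submodule K (ι → K) := Submodule.span K (Set.range σ') with hW
    have hq : W.mkQ w' ≠ 0 := by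
      rw [Submodule.mkQ_apply, ne_eq, Submodule.Quotient.mk_eq_zero]
      exact hn
    obtain ⟨f, hf⟩ : ∃ f : Module.Dual K ((ι → K) ⧸ W), f (W.mkQ w') ≠ 0 := by
      by_contra hall
      push_neg at hall
      exact hq ((Module.forall_dual_apply_eq_zero_iff K _).mp hall)
    set φ : (ι → K) →ₗ[K] K := f.comp W.mkQ with hφ
    have hφσ : ∀ i, φ (σ' i) = 0 := by
      intro i
      have h0 : W.mkQ (σ' i) = 0 := by
        rw [Submodule.mkQ_apply, Submodule.Quotient.mk_eq_zero]
        exact Submodule.subset_span ⟨i, rfl⟩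
      rw [hφ, LinearMap.comp_apply, h0, map_zero]
    set g : ι → K := fun x => φ (fun j => if x = j then 1 else 0) with hg
    have hexp : ∀ u : ι → K, φ u = ∑ x, u x * g x := by
      intro u
      conv_lhs => rw [pi_eq_sum_univ u]
      rw [map_sum]
      exact Finset.sum_congr rfl fun x _ => by rw [map_smul, smul_eq_mul]
    have hzero : ∀ i, ∑ x, σ i x * ((g x : K) : ℂ) = 0 := by
      intro i
      have h0 : (∑ x, σ' i x * g x) = 0 := by rw [← hexp (σ' i), hφσ i]
      have h1 : ((∑ x, σ' i x * g x : K) : ℂ) = 0 := by rw [h0]; norm_num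
      push_cast at h1
      simpa [hcoeσ] using h1
    have hwz := h g hzero
    have h2 : (∑ x, w' x * g x : K) = 0 := by
      have h3 : ((∑ x, w' x * g x : K) : ℂ) = 0 := by
        push_cast
        simpa [hcoew] using hwz
      exact_mod_cast h3
    apply hf
    have h4 : f (W.mkQ w') = φ w' := rfl
    rw [h4, hexp w', h2]
  obtain ⟨d, hd⟩ := (Submodule.mem_span_range_iff_exists_fun K).mp hmem
  refine ⟨fun i => ((d i : K) : ℂ), ?_⟩
  funext x
  have h3 : (((∑ i, d i • σ' i) x : K) : ℂ) = ((w' x : K) : ℂ) := by rw [hd]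
  rw [Finset.sum_apply] at h3
  simp only [Pi.smul_apply, smul_eq_mul] at h3
  push_cast at h3
  rw [Finset.sum_apply]
  simp only [Pi.smul_apply, smul_eq_mul]
  exact h3.symm

/-! ### Geometry of `ψ_α` -/

def A0 : Set (F2 2) := {u | u 0 = 0 ∧ u 1 = 0}

def A1 : Set (F2 2) := {u | u 0 + u 1 = 1}

lemma memA0 (u : F2 2) : u ∈ A0 ↔ (u 0 = 0 ∧ u 1 = 0) := Iff.rfl

lemma memA1 (u : F2 2) : u ∈ A1 ↔ (u 0 + u 1 = 1) := Iff.rfl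

/-- Indicator function of a set, as a vector in `ℂ^{𝔽₂ⁿ}`. -/
def ind {n : ℕ} (A : Set (F2 n)) : F2 n → ℂ := fun x => if x ∈ A then 1 else 0

lemma ind_eq_one {n : ℕ} {A : Set (F2 n)} {u : F2 n} (h : u ∈ A) : ind A u = 1 := if_pos h

lemma ind_eq_zero {n : ℕ} {A : Set (F2 n)} {u : F2 n} (h : u ∉ A) : ind A u = 0 := if_neg h

lemma ind_mem_Kg {n : ℕ} (A : Set (F2 n)) (u : F2 n) : ind A u ∈ Kg := by
  unfold ind
  split
  · exact Kg.one_mem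
  · exact Kg.zero_mem

lemma ind_stab {n : ℕ} {A : Set (F2 n)} (hA : IsAffineSubspace A) :
    IsStabilizerState (ind A) := by
  refine ⟨A, fun _ => 0, fun _ => 0, hA, fun x y => by simp, ⟨rfl, fun x y z => by simp⟩,
    fun x => ?_⟩
  simp [ind, ZMod.val_zero]

lemma A0_affine : IsAffineSubspace A0 := by
  constructor
  · exact ⟨![0, 0], by rw [memA0]; constructor <;> rfl⟩
  · intro x hx y hy z hz
    rw [memA0] at *
    refine ⟨?_, ?_⟩ <;> simp [Pi.add_apply, hx.1, hx.2, hy.1, hy.2, hz.1, hz.2]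

lemma A1_affine : IsAffineSubspace A1 := by
  constructor
  · exact ⟨![0, 1], by rw [memA1]; decide⟩
  · intro x hx y hy z hz
    rw [memA1] at *
    have h : (x + y + z) 0 + (x + y + z) 1 = (x 0 + x 1) + (y 0 + y 1) + (z 0 + z 1) := by
      simp only [Pi.add_apply]; ring
    rw [h, hx, hy, hz]
    decide

lemma psi_eq (α : ℂ) (u : F2 2) : psiAlpha α u = ind A0 u + α * ind A1 u := by
  rcases zmod2 (u 0) with h0 | h0 <;> rcases zmod2 (u 1) with h1 | h1 <;>
    simp [psiAlpha, ind, memA0, memA1, Set.mem_setOf_eq, h0, h1,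
      show (0 : ZMod 2) + 0 = 0 from rfl, show (0 : ZMod 2) + 1 = 1 from rfl,
      show (1 : ZMod 2) + 0 = 1 from rfl, show (1 : ZMod 2) + 1 = 0 from rfl,
      show (1 : ZMod 2) ≠ 0 from by decide, show (0 : ZMod 2) ≠ 1 from by decide]

/-! ### Front and back of a 4-bit string -/

def front (x : F2 4) : F2 2 := fun i => x (Fin.castAdd 2 i)

def back (x : F2 4) : F2 2 := fun j => x (Fin.natAdd 2 j)

lemma tensor2_eq (φ ρ : F2 2 → ℂ) (x : F2 4) :
    tensor2 φ ρ x = φ (front x) * ρ (back x) := rfl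

/-- Product of two affine subspaces of `𝔽₂²`, inside `𝔽₂⁴`. -/
def Bst (s t : Set (F2 2)) : Set (F2 4) := {x | front x ∈ s ∧ back x ∈ t}

lemma Bst_affine {s t : Set (F2 2)} (hs : IsAffineSubspace s) (ht : IsAffineSubspace t) :
    IsAffineSubspace (Bst s t) := by
  obtain ⟨⟨u, hu⟩, hcs⟩ := hs
  obtain ⟨⟨v, hv⟩, hct⟩ := ht
  constructor
  · refine ⟨Fin.append u v, ?_, ?_⟩
    · rw [show front (Fin.append u v) = u from funext fun i => Fin.append_left u v i]
      exact hu
    · rw [show back (Fin.append u v) = v from funext fun j => Fin.append_right u v j]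
      exact hv
  · rintro x ⟨hx1, hx2⟩ y ⟨hy1, hy2⟩ z ⟨hz1, hz2⟩
    exact ⟨hcs _ hx1 _ hy1 _ hz1, hct _ hx2 _ hy2 _ hz2⟩

lemma ind_Bst (s t : Set (F2 2)) (x : F2 4) :
    ind (Bst s t) x = ind s (front x) * ind t (back x) := by
  by_cases h1 : front x ∈ s <;> by_cases h2 : back x ∈ t <;>
    simp [ind, Bst, Set.mem_setOf_eq, h1, h2]


/-! ### Concrete points -/

def q00 : F2 2 := ![0, 0]
def q01 : F2 2 := ![0, 1]
def q10 : F2 2 := ![1, 0]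
def q11 : F2 2 := ![1, 1]

lemma psi_q00 (α : ℂ) : psiAlpha α q00 = 1 := by
  rw [psi_eq, ind_eq_one (show q00 ∈ A0 by rw [memA0]; decide),
    ind_eq_zero (show q00 ∉ A1 by rw [memA1]; decide)]
  ring

lemma psi_q01 (α : ℂ) : psiAlpha α q01 = α := by
  rw [psi_eq, ind_eq_zero (show q01 ∉ A0 by rw [memA0]; decide),
    ind_eq_one (show q01 ∈ A1 by rw [memA1]; decide)]
  ring

lemma psi_q10 (α : ℂ) : psiAlpha α q10 = α := by
  rw [psi_eq, ind_eq_zero (show q10 ∉ A0 by rw [memA0]; decide),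
    ind_eq_one (show q10 ∈ A1 by rw [memA1]; decide)]
  ring

lemma psi_q11 (α : ℂ) : psiAlpha α q11 = 0 := by
  rw [psi_eq, ind_eq_zero (show q11 ∉ A0 by rw [memA0]; decide),
    ind_eq_zero (show q11 ∉ A1 by rw [memA1]; decide)]
  ring

/-! ### Part 1: `χ(ψ_α) = 2` -/

lemma stabRank_psiAlpha {α : ℂ} (hα : α ≠ 0) : stabRank (psiAlpha α) = 2 := by
  have h2 : (2 : ℕ) ∈ {r : ℕ | ∃ (c : Fin r → ℂ) (σ : Fin r → (F2 2 → ℂ)),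
      (∀ i, IsStabilizerState (σ i)) ∧ psiAlpha α = ∑ i, c i • σ i} := by
    refine ⟨![1, α], ![ind A0, ind A1], ?_, ?_⟩
    · intro i
      fin_cases i
      · exact ind_stab A0_affine
      · exact ind_stab A1_affine
    · funext u
      rw [Finset.sum_apply, Fin.sum_univ_two]
      simp only [Matrix.cons_val_zero, Matrix.cons_val_one, Matrix.head_cons, Pi.smul_apply,
        smul_eq_mul]
      rw [psi_eq]
      ring
  apply le_antisymm
  · exact Nat.sInf_le h2
  · apply le_csInf ⟨2, h2⟩
    rintro r ⟨c, σ, hst, heq⟩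
    by_contra hlt
    push_neg at hlt
    interval_cases r
    · have h0 := congrFun heq q00
      rw [show (∑ i : Fin 0, c i • σ i) q00 = 0 from by simp, psi_q00] at h0
      exact one_ne_zero h0
    · obtain ⟨A, l, q, hA, hl, hq, hform⟩ := hst 0
      have heval : ∀ u, psiAlpha α u = c 0 * σ 0 u := by
        intro u
        have h5 := congrFun heq u
        rw [Finset.sum_apply, Fin.sum_univ_one] at h5
        simpa only [Pi.smul_apply, smul_eq_mul] using h5
      have hne : ∀ u, psiAlpha α u ≠ 0 → u ∈ A := by
        intro u hu
        by_contra hnu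
        apply hu
        rw [heval u, hform u, if_neg hnu, mul_zero]
      have h00 : q00 ∈ A := hne q00 (by rw [psi_q00]; exact one_ne_zero)
      have h01 : q01 ∈ A := hne q01 (by rw [psi_q01]; exact hα)
      have h10 : q10 ∈ A := hne q10 (by rw [psi_q10]; exact hα)
      have h11 : q11 ∈ A := by
        have h7 := hA.2 q01 h01 q10 h10 q00 h00
        rwa [show q01 + q10 + q00 = q11 from by decide] at h7
      have hc0 : c 0 ≠ 0 := by
        intro hc
        have h6 := heval q00
        rw [hc, zero_mul, psi_q00] at h6
        exact one_ne_zero h6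
      have h8 := heval q11
      rw [psi_q11, hform q11, if_pos h11] at h8
      have h9 : c 0 * (Complex.I ^ (l q11).val * (-1 : ℂ) ^ (q q11).val) ≠ 0 :=
        mul_ne_zero hc0 (mul_ne_zero (pow_ne_zero _ Complex.I_ne_zero)
          (pow_ne_zero _ (by norm_num)))
      exact h9 h8.symm

/-! ### The three indicator layers of `ψ_α ⊗ ψ_α` -/

def w0 : F2 4 → ℂ := fun x => ind A0 (front x) * ind A0 (back x)
def w1 : F2 4 → ℂ := fun x => ind A0 (front x) * ind A1 (back x) + ind A1 (front x) * ind A0 (back x)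
def w2 : F2 4 → ℂ := fun x => ind A1 (front x) * ind A1 (back x)

lemma w0_mem (x : F2 4) : w0 x ∈ Kg := Kg.mul_mem (ind_mem_Kg _ _) (ind_mem_Kg _ _)
lemma w1_mem (x : F2 4) : w1 x ∈ Kg :=
  Kg.add_mem (Kg.mul_mem (ind_mem_Kg _ _) (ind_mem_Kg _ _))
    (Kg.mul_mem (ind_mem_Kg _ _) (ind_mem_Kg _ _))
lemma w2_mem (x : F2 4) : w2 x ∈ Kg := Kg.mul_mem (ind_mem_Kg _ _) (ind_mem_Kg _ _)

lemma tensor_decomp (α : ℂ) (x : F2 4) :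
    tensor2 (psiAlpha α) (psiAlpha α) x = w0 x + α * w1 x + α ^ 2 * w2 x := by
  rw [tensor2_eq, psi_eq, psi_eq]
  simp only [w0, w1, w2]
  ring

def O4 : F2 4 := ![0, 0, 0, 0]
def M1 : F2 4 := ![0, 0, 0, 1]
def M2 : F2 4 := ![0, 0, 1, 0]
def M3 : F2 4 := ![0, 1, 0, 0]
def C11 : F2 4 := ![0, 1, 0, 1]
def P4 : F2 4 := ![0, 1, 1, 1]

lemma wvals_O4 : w0 O4 = 1 ∧ w1 O4 = 0 ∧ w2 O4 = 0 := by
  have h1 : front O4 ∈ A0 := by rw [memA0]; decide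
  have h2 : front O4 ∉ A1 := by rw [memA1]; decide
  have h3 : back O4 ∈ A0 := by rw [memA0]; decide
  have h4 : back O4 ∉ A1 := by rw [memA1]; decide
  refine ⟨?_, ?_, ?_⟩ <;> simp [w0, w1, w2, ind, h1, h2, h3, h4]

lemma wvals_M1 : w0 M1 = 0 ∧ w1 M1 = 1 ∧ w2 M1 = 0 := by
  have h1 : front M1 ∈ A0 := by rw [memA0]; decide
  have h2 : front M1 ∉ A1 := by rw [memA1]; decide
  have h3 : back M1 ∉ A0 := by rw [memA0]; decide
  have h4 : back M1 ∈ A1 := by rw [memA1]; decide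
  refine ⟨?_, ?_, ?_⟩ <;> simp [w0, w1, w2, ind, h1, h2, h3, h4]

lemma wvals_M2 : w0 M2 = 0 ∧ w1 M2 = 1 ∧ w2 M2 = 0 := by
  have h1 : front M2 ∈ A0 := by rw [memA0]; decide
  have h2 : front M2 ∉ A1 := by rw [memA1]; decide
  have h3 : back M2 ∉ A0 := by rw [memA0]; decide
  have h4 : back M2 ∈ A1 := by rw [memA1]; decide
  refine ⟨?_, ?_, ?_⟩ <;> simp [w0, w1, w2, ind, h1, h2, h3, h4]

lemma wvals_M3 : w0 M3 = 0 ∧ w1 M3 = 1 ∧ w2 M3 = 0 := by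
  have h1 : front M3 ∉ A0 := by rw [memA0]; decide
  have h2 : front M3 ∈ A1 := by rw [memA1]; decide
  have h3 : back M3 ∈ A0 := by rw [memA0]; decide
  have h4 : back M3 ∉ A1 := by rw [memA1]; decide
  refine ⟨?_, ?_, ?_⟩ <;> simp [w0, w1, w2, ind, h1, h2, h3, h4]

lemma wvals_C11 : w0 C11 = 0 ∧ w1 C11 = 0 ∧ w2 C11 = 1 := by
  have h1 : front C11 ∉ A0 := by rw [memA0]; decide
  have h2 : front C11 ∈ A1 := by rw [memA1]; decide
  have h3 : back C11 ∉ A0 := by rw [memA0]; decide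
  have h4 : back C11 ∈ A1 := by rw [memA1]; decide
  refine ⟨?_, ?_, ?_⟩ <;> simp [w0, w1, w2, ind, h1, h2, h3, h4]

lemma wvals_P4 : w0 P4 = 0 ∧ w1 P4 = 0 ∧ w2 P4 = 0 := by
  have h1 : front P4 ∉ A0 := by rw [memA0]; decide
  have h2 : front P4 ∈ A1 := by rw [memA1]; decide
  have h3 : back P4 ∉ A0 := by rw [memA0]; decide
  have h4 : back P4 ∉ A1 := by rw [memA1]; decide
  refine ⟨?_, ?_, ?_⟩ <;> simp [w0, w1, w2, ind, h1, h2, h3, h4]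

lemma cons4_two {β : Type*} (a b c d : β) : ![a, b, c, d] 2 = c := rfl

lemma cons4_three {β : Type*} (a b c d : β) : ![a, b, c, d] 3 = d := rfl

lemma sum_swap_mul {m n : ℕ} (f : Fin m → ℂ) (M : Fin m → Fin n → ℂ) (g : Fin n → ℂ) :
    ∑ t, f t * ∑ i, M t i * g i = ∑ i, (∑ t, f t * M t i) * g i := by
  calc ∑ t, f t * ∑ i, M t i * g i
      = ∑ t, ∑ i, f t * (M t i * g i) := by simp_rw [Finset.mul_sum]
    _ = ∑ i, ∑ t, f t * (M t i * g i) := Finset.sum_comm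
    _ = ∑ i, (∑ t, f t * M t i) * g i := by simp_rw [Finset.sum_mul, mul_assoc]


/-! ### Part 2 lower bound: no 3-term decomposition of `ψ_α ⊗ ψ_α` -/

set_option maxHeartbeats 1000000 in
lemma no3 {α : ℂ} (hα : α ≠ 0) (ht : Transcendental ℚ α)
    (c : Fin 3 → ℂ) (σ : Fin 3 → F2 4 → ℂ) (hst : ∀ i, IsStabilizerState (σ i))
    (heq : tensor2 (psiAlpha α) (psiAlpha α) = ∑ i, c i • σ i) : False := by
  classical
  have heval : ∀ x, tensor2 (psiAlpha α) (psiAlpha α) x = ∑ i, c i * σ i x := by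
    intro x
    have h5 := congrFun heq x
    rw [Finset.sum_apply] at h5
    simpa only [Pi.smul_apply, smul_eq_mul] using h5
  have hσK : ∀ i x, σ i x ∈ Kg := fun i x => stabVal_mem_Kg (hst i) x
  have hgsum : ∀ g : F2 4 → Kg, (∀ i, ∑ x, σ i x * ((g x : Kg) : ℂ) = 0) →
      (∑ x, w0 x * ((g x : Kg) : ℂ) = 0 ∧ ∑ x, w1 x * ((g x : Kg) : ℂ) = 0 ∧
        ∑ x, w2 x * ((g x : Kg) : ℂ) = 0) := by
    intro g hg
    have h1 : ∑ x, tensor2 (psiAlpha α) (psiAlpha α) x * ((g x : Kg) : ℂ) = 0 := by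
      calc ∑ x, tensor2 (psiAlpha α) (psiAlpha α) x * ((g x : Kg) : ℂ)
          = ∑ x, ∑ i, c i * (σ i x * ((g x : Kg) : ℂ)) := by
            refine Finset.sum_congr rfl fun x _ => ?_
            rw [heval x, Finset.sum_mul]
            exact Finset.sum_congr rfl fun i _ => by ring
        _ = ∑ i, c i * ∑ x, σ i x * ((g x : Kg) : ℂ) := by
            rw [Finset.sum_comm]
            exact Finset.sum_congr rfl fun i _ => (Finset.mul_sum _ _ _).symm
        _ = 0 := by
            refine Finset.sum_eq_zero fun i _ => ?_
            rw [hg i, mul_zero]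
    have h2 : ∑ x, tensor2 (psiAlpha α) (psiAlpha α) x * ((g x : Kg) : ℂ)
        = (∑ x, w0 x * ((g x : Kg) : ℂ)) + (∑ x, w1 x * ((g x : Kg) : ℂ)) * α
          + (∑ x, w2 x * ((g x : Kg) : ℂ)) * α ^ 2 := by
      calc ∑ x, tensor2 (psiAlpha α) (psiAlpha α) x * ((g x : Kg) : ℂ)
          = ∑ x, (w0 x * ((g x : Kg) : ℂ) + (w1 x * ((g x : Kg) : ℂ)) * α
              + (w2 x * ((g x : Kg) : ℂ)) * α ^ 2) := by
            refine Finset.sum_congr rfl fun x _ => ?_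
            rw [tensor_decomp α x]
            ring
        _ = _ := by
            rw [Finset.sum_add_distrib, Finset.sum_add_distrib, ← Finset.sum_mul, ← Finset.sum_mul]
    have hmem0 : (∑ x, w0 x * ((g x : Kg) : ℂ)) ∈ Kg :=
      sum_mem fun x _ => Kg.mul_mem (w0_mem x) (g x).2
    have hmem1 : (∑ x, w1 x * ((g x : Kg) : ℂ)) ∈ Kg :=
      sum_mem fun x _ => Kg.mul_mem (w1_mem x) (g x).2
    have hmem2 : (∑ x, w2 x * ((g x : Kg) : ℂ)) ∈ Kg :=
      sum_mem fun x _ => Kg.mul_mem (w2_mem x) (g x).2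
    have hrel : (∑ x, w0 x * ((g x : Kg) : ℂ)) + (∑ x, w1 x * ((g x : Kg) : ℂ)) * α
        + (∑ x, w2 x * ((g x : Kg) : ℂ)) * α ^ 2 = 0 := by
      rw [← h2]
      exact h1
    exact gauss_indep ht hmem0 hmem1 hmem2 hrel
  obtain ⟨d0, hd0⟩ := dual_key Kg σ hσK w0 w0_mem fun g hg => (hgsum g hg).1
  obtain ⟨d1, hd1⟩ := dual_key Kg σ hσK w1 w1_mem fun g hg => (hgsum g hg).2.1
  obtain ⟨d2, hd2⟩ := dual_key Kg σ hσK w2 w2_mem fun g hg => (hgsum g hg).2.2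
  set D : Matrix (Fin 3) (Fin 3) ℂ := Matrix.of ![d0, d1, d2] with hD
  have hWpt : ∀ t x, (![w0, w1, w2] : Fin 3 → F2 4 → ℂ) t x = ∑ i, D t i * σ i x := by
    intro t x
    have h6 : (![w0, w1, w2] : Fin 3 → F2 4 → ℂ) t = ∑ i, (D t i) • σ i := by
      fin_cases t
      · exact hd0
      · exact hd1
      · exact hd2
    have h7 := congrFun h6 x
    rw [Finset.sum_apply] at h7
    simpa only [Pi.smul_apply, smul_eq_mul] using h7
  have hdet : D.det ≠ 0 := by
    intro h0
    obtain ⟨e, he, heD⟩ := Matrix.exists_vecMul_eq_zero_iff.mpr h0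
    have hv : ∀ i, ∑ t, e t * D t i = 0 := by
      intro i
      have h8 := congrFun heD i
      simpa [Matrix.vecMul, dotProduct] using h8
    have hpt : ∀ x, e 0 * w0 x + e 1 * w1 x + e 2 * w2 x = 0 := by
      intro x
      have hX : ∑ t, e t * (![w0, w1, w2] : Fin 3 → F2 4 → ℂ) t x = 0 := by
        calc ∑ t, e t * (![w0, w1, w2] : Fin 3 → F2 4 → ℂ) t x
            = ∑ t, e t * ∑ i, D t i * σ i x :=
              Finset.sum_congr rfl fun t _ => by rw [hWpt t x]
          _ = ∑ i, (∑ t, e t * D t i) * σ i x := sum_swap_mul _ _ _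
          _ = 0 := by
              refine Finset.sum_eq_zero fun i _ => ?_
              rw [hv i, zero_mul]
      rw [Fin.sum_univ_three] at hX
      simpa using hX
    apply he
    have h9 := hpt O4
    rw [wvals_O4.1, wvals_O4.2.1, wvals_O4.2.2] at h9
    have h10 := hpt M1
    rw [wvals_M1.1, wvals_M1.2.1, wvals_M1.2.2] at h10
    have h11 := hpt C11
    rw [wvals_C11.1, wvals_C11.2.1, wvals_C11.2.2] at h11
    have he0 : e 0 = 0 := by simpa using h9
    have he1 : e 1 = 0 := by simpa using h10
    have he2 : e 2 = 0 := by simpa using h11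
    funext t
    fin_cases t
    · simpa using he0
    · simpa using he1
    · simpa using he2
  set E : Matrix (Fin 3) (Fin 3) ℂ := D⁻¹ with hE
  have hED : E * D = 1 := Matrix.nonsing_inv_mul D (Ne.isUnit hdet)
  have hσw : ∀ j x, σ j x = E j 0 * w0 x + E j 1 * w1 x + E j 2 * w2 x := by
    intro j x
    have h12 : ∑ t, E j t * (![w0, w1, w2] : Fin 3 → F2 4 → ℂ) t x = σ j x := by
      calc ∑ t, E j t * (![w0, w1, w2] : Fin 3 → F2 4 → ℂ) t x
          = ∑ t, E j t * ∑ i, D t i * σ i x :=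
            Finset.sum_congr rfl fun t _ => by rw [hWpt t x]
        _ = ∑ i, (∑ t, E j t * D t i) * σ i x := sum_swap_mul _ _ _
        _ = ∑ i, (E * D) j i * σ i x :=
            Finset.sum_congr rfl fun i _ => by rw [Matrix.mul_apply]
        _ = σ j x := by
            rw [hED]
            simp [Matrix.one_apply]
    rw [← h12, Fin.sum_univ_three]
    simp
  have hE1 : ∀ j, E j 1 = 0 := by
    intro j
    by_contra hne
    obtain ⟨A, l, q, hA, hl, hq, hform⟩ := hst j
    have hmemA : ∀ x : F2 4, w0 x = 0 → w1 x = 1 → w2 x = 0 → x ∈ A := by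
      intro x h0 h1 h2
      by_contra hnx
      apply hne
      have h13 := hσw j x
      rw [hform x, if_neg hnx, h0, h1, h2] at h13
      rw [mul_zero, mul_zero, mul_one, zero_add, add_zero] at h13
      exact h13.symm
    have hm1 : M1 ∈ A := hmemA M1 wvals_M1.1 wvals_M1.2.1 wvals_M1.2.2
    have hm2 : M2 ∈ A := hmemA M2 wvals_M2.1 wvals_M2.2.1 wvals_M2.2.2
    have hm3 : M3 ∈ A := hmemA M3 wvals_M3.1 wvals_M3.2.1 wvals_M3.2.2
    have hP : P4 ∈ A := by
      have h14 := hA.2 M1 hm1 M2 hm2 M3 hm3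
      rwa [show M1 + M2 + M3 = P4 from by decide] at h14
    have h15 := hσw j P4
    rw [hform P4, if_pos hP, wvals_P4.1, wvals_P4.2.1, wvals_P4.2.2] at h15
    have h16 : Complex.I ^ (l P4).val * (-1 : ℂ) ^ (q P4).val ≠ 0 :=
      mul_ne_zero (pow_ne_zero _ Complex.I_ne_zero) (pow_ne_zero _ (by norm_num))
    apply h16
    rw [h15]
    ring
  have hσM1 : ∀ j, σ j M1 = 0 := by
    intro j
    rw [hσw j M1, wvals_M1.1, wvals_M1.2.1, wvals_M1.2.2, hE1 j]
    ring
  have hval : tensor2 (psiAlpha α) (psiAlpha α) M1 = α := by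
    rw [tensor2_eq, psi_eq, psi_eq,
      ind_eq_one (show front M1 ∈ A0 by rw [memA0]; decide),
      ind_eq_zero (show front M1 ∉ A1 by rw [memA1]; decide),
      ind_eq_zero (show back M1 ∉ A0 by rw [memA0]; decide),
      ind_eq_one (show back M1 ∈ A1 by rw [memA1]; decide)]
    ring
  have h17 := heval M1
  rw [hval] at h17
  apply hα
  rw [h17]
  exact Finset.sum_eq_zero fun j _ => by rw [hσM1 j, mul_zero]

/-- Padding a decomposition with at most 3 terms to exactly 3 terms. -/
lemma pad3 {r : ℕ} (hr : r ≤ 3) {ψ : F2 4 → ℂ} (c : Fin r → ℂ) (σ : Fin r → F2 4 → ℂ)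
    (hs : ∀ i, IsStabilizerState (σ i)) (heq : ψ = ∑ i, c i • σ i) :
    ∃ (c' : Fin 3 → ℂ) (σ' : Fin 3 → F2 4 → ℂ),
      (∀ i, IsStabilizerState (σ' i)) ∧ ψ = ∑ i, c' i • σ' i := by
  classical
  have huniv : IsAffineSubspace (Set.univ : Set (F2 4)) :=
    ⟨⟨0, trivial⟩, fun _ _ _ _ _ _ => trivial⟩
  refine ⟨fun i => if h : (i : ℕ) < r then c ⟨i, h⟩ else 0,
    fun i => if h : (i : ℕ) < r then σ ⟨i, h⟩ else ind Set.univ, fun i => ?_, ?_⟩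
  · show IsStabilizerState (if h : (i : ℕ) < r then σ ⟨i, h⟩ else ind Set.univ)
    by_cases h : (i : ℕ) < r
    · rw [dif_pos h]; exact hs _
    · rw [dif_neg h]; exact ind_stab huniv
  · rw [heq]
    have hterm : ∀ i : Fin 3,
        (if h : (i : ℕ) < r then c ⟨i, h⟩ else 0) •
          (if h : (i : ℕ) < r then σ ⟨i, h⟩ else ind Set.univ)
        = if h : (i : ℕ) < r then c ⟨i, h⟩ • σ ⟨i, h⟩ else 0 := by
      intro i
      by_cases h : (i : ℕ) < r
      · rw [dif_pos h, dif_pos h, dif_pos h]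
      · rw [dif_neg h, dif_neg h, dif_neg h, zero_smul]
    have h18 : (∑ i : Fin 3, if h : ((i : ℕ)) < r then c ⟨i, h⟩ • σ ⟨i, h⟩ else 0)
        = ∑ i : Fin r, c i • σ i := by
      calc (∑ i : Fin 3, if h : ((i : ℕ)) < r then c ⟨i, h⟩ • σ ⟨i, h⟩ else 0)
          = ∑ n ∈ Finset.range 3, (if h : n < r then c ⟨n, h⟩ • σ ⟨n, h⟩ else 0) :=
            Fin.sum_univ_eq_sum_range (fun n => if h : n < r then c ⟨n, h⟩ • σ ⟨n, h⟩ else 0) 3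
        _ = ∑ n ∈ Finset.range r, (if h : n < r then c ⟨n, h⟩ • σ ⟨n, h⟩ else 0) :=
            (Finset.sum_subset (Finset.range_subset_range.mpr hr)
              (fun n _ hn => dif_neg (by simpa using hn))).symm
        _ = ∑ i : Fin r, (if h : ((i : ℕ)) < r then c ⟨i, h⟩ • σ ⟨i, h⟩ else 0) :=
            (Fin.sum_univ_eq_sum_range (fun n => if h : n < r then c ⟨n, h⟩ • σ ⟨n, h⟩ else 0) r).symm
        _ = ∑ i : Fin r, c i • σ i :=
            Finset.sum_congr rfl fun i _ => by rw [dif_pos i.isLt]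
    rw [← h18]
    exact Finset.sum_congr rfl fun i _ => (hterm i).symm

/-! ### Part 2: `χ(ψ_α ⊗ ψ_α) = 4` -/

lemma stabRank_tensor {α : ℂ} (hα : α ≠ 0) (ht : Transcendental ℚ α) :
    stabRank (tensor2 (psiAlpha α) (psiAlpha α)) = 4 := by
  have h4 : (4 : ℕ) ∈ {r : ℕ | ∃ (c : Fin r → ℂ) (σ : Fin r → (F2 4 → ℂ)),
      (∀ i, IsStabilizerState (σ i)) ∧ tensor2 (psiAlpha α) (psiAlpha α) = ∑ i, c i • σ i} := by
    refine ⟨![1, α, α, α ^ 2],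
      ![ind (Bst A0 A0), ind (Bst A0 A1), ind (Bst A1 A0), ind (Bst A1 A1)], ?_, ?_⟩
    · intro i
      fin_cases i
      · exact ind_stab (Bst_affine A0_affine A0_affine)
      · exact ind_stab (Bst_affine A0_affine A1_affine)
      · exact ind_stab (Bst_affine A1_affine A0_affine)
      · exact ind_stab (Bst_affine A1_affine A1_affine)
    · funext x
      rw [Finset.sum_apply, Fin.sum_univ_four]
      simp only [Matrix.cons_val_zero, Matrix.cons_val_one, Matrix.head_cons, Pi.smul_apply,
        smul_eq_mul, cons4_two, cons4_three]
      rw [tensor2_eq, psi_eq, psi_eq, ind_Bst, ind_Bst, ind_Bst, ind_Bst]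
      ring
  apply le_antisymm
  · exact Nat.sInf_le h4
  · apply le_csInf ⟨4, h4⟩
    rintro r ⟨c, σ, hst, heq⟩
    by_contra hlt
    push_neg at hlt
    obtain ⟨c', σ', hst', heq'⟩ := pad3 (by omega) c σ hst heq
    exact no3 hα ht c' σ' hst' heq'


/-- For `α ≠ 0` transcendental over `ℚ`, `χ(ψ_α) = 2` and `χ(ψ_α ⊗ ψ_α) = 4`. -/
theorem psiAlpha_multiplicative (α : ℂ) (hα : α ≠ 0) (ht : Transcendental ℚ α) :
    stabRank (psiAlpha α) = 2 ∧ stabRank (tensor2 (psiAlpha α) (psiAlpha α)) = 4 :=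
  ⟨stabRank_psiAlpha hα, stabRank_tensor hα ht⟩

end StabPaper
end
end
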